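/- arXiv:1812.01971 — 11 statements merged into one kernel-verified Lean document; each statement's English description precedes it below -/
import Mathlib

section
/- Let R be a unital ring, a ∈ R a regular element with a = aba, and e = ab. Then the map x ↦ xb is a ring isomorphism from aRa (with multiplication inherited from R) onto the ring (eRe, +, ∗) with multiplication x ∗ y = x(eae)y, and its inverse is x ↦ xa. -/
/-- Let `a` be regular with `a = a*b*a` and `e = a*b`. Then `x ↦ x*b` is a ring isomorphism
from `aRa` (with the multiplication of `R`) onto the ring `(eRe, +, ∗)` with deformed
multiplication `x ∗ y = x*(e*a*e)*y`, with inverse `x ↦ x*a`. -/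
theorem aRa_iso_corner_deformed {R : Type*} [Ring R] (a b : R) (hb : a * b * a = a) :
    (∀ x : R, (∃ r : R, x = a * r * a) →
        (a * b) * (x * b) * (a * b) = x * b) ∧  -- x ↦ x*b maps aRa into eRe
    (∀ x : R, (a * b) * x * (a * b) = x →
        ∃ r : R, x * a = a * r * a) ∧  -- x ↦ x*a maps eRe into aRa
    (∀ x : R, (∃ r : R, x = a * r * a) → (x * b) * a = x) ∧  -- inverse on aRa
    (∀ x : R, (a * b) * x * (a * b) = x → (x * a) * b = x) ∧  -- inverse on eRe
    (∀ x y : R, (x + y) * b = x * b + y * b) ∧  -- additivity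
    (∀ x y : R, (∃ r : R, x = a * r * a) → (∃ r : R, y = a * r * a) →
        (x * y) * b = (x * b) * ((a * b) * a * (a * b)) * (y * b)) := by  -- multiplicativity
  have hb' : a * (b * a) = a := by rw [← mul_assoc, hb]
  have h1 : ∀ c : R, a * (b * (a * c)) = a * c := fun c => by
    rw [← mul_assoc, ← mul_assoc, hb]
  refine ⟨?_, ?_, ?_, ?_, ?_, ?_⟩
  · rintro x ⟨r, rfl⟩; simp [mul_assoc, h1, hb']
  · intro x hx
    refine ⟨b * x * a * b, ?_⟩
    rw [← hx]; simp [mul_assoc, h1, hb']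
  · rintro x ⟨r, rfl⟩; simp [mul_assoc, h1, hb']
  · intro x hx
    rw [← hx]; simp [mul_assoc, h1, hb']
  · intro x y; rw [add_mul]
  · rintro x y ⟨r, rfl⟩ ⟨s, rfl⟩; simp [mul_assoc, h1, hb']
end

section
/- Let R be a unital ring and s ∈ R. The Jacobson radical of the ring R_s (R with multiplication x ∗ y = xsy) equals {x ∈ R : sxs ∈ J(R)}, where J(R) is the Jacobson radical of R. -/
/-- The Jacobson radical of the (possibly non-unital) ring on the additive group of `R`
with multiplication `mul`: the set of `x` such that `mul x r` is right quasi-regular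
for every `r`. -/
def jacobsonQR {R : Type*} [Ring R] (mul : R → R → R) : Set R :=
  {x : R | ∀ r : R, ∃ b : R, mul x r + b - mul (mul x r) b = 0}

/-- Jacobson's trick: if `1 - a*b` is a unit then so is `1 - b*a`. -/
lemma isUnit_one_sub_swap {R : Type*} [Ring R] {a b : R} (h : IsUnit (1 - a * b)) :
    IsUnit (1 - b * a) := by
  obtain ⟨u, hu⟩ := h
  have h1 : (1 - a * b) * ↑u⁻¹ = 1 := by rw [← hu]; exact u.mul_inv
  have h2 : (↑u⁻¹ : R) * (1 - a * b) = 1 := by rw [← hu]; exact u.inv_mul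
  refine isUnit_iff_exists.mpr ⟨1 + b * ↑u⁻¹ * a, ?_, ?_⟩
  · have e1 : (1 - b * a) * (1 + b * ↑u⁻¹ * a) - 1
        = b * ((1 - a * b) * ↑u⁻¹ - 1) * a := by noncomm_ring
    rw [h1, sub_self, mul_zero, zero_mul] at e1
    exact sub_eq_zero.mp e1
  · have e2 : (1 + b * ↑u⁻¹ * a) * (1 - b * a) - 1
        = b * ((↑u⁻¹ : R) * (1 - a * b) - 1) * a := by noncomm_ring
    rw [h2, sub_self, mul_zero, zero_mul] at e2
    exact sub_eq_zero.mp e2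

/-- For `s ∈ R`, the Jacobson radical of `R_s` (the ring `R` with multiplication
`x ∗ y = x*s*y`) equals `{x : s*x*s ∈ J(R)}`. -/
theorem jacobson_deformed {R : Type*} [Ring R] (s : R) :
    jacobsonQR (fun x y : R => x * s * y) =
      {x : R | s * x * s ∈ Ideal.jacobson (⊥ : Ideal R)} := by
  ext x
  simp only [jacobsonQR, Set.mem_setOf_eq, Ideal.mem_jacobson_iff, Ideal.mem_bot]
  constructor
  · intro h
    -- every `1 - s*x*s*r` has a right inverse of the same shape
    have key : ∀ r : R, ∃ c : R, (1 - s * x * s * r) * (1 - s * x * s * c) = 1 := by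
      intro r
      obtain ⟨b, hb⟩ := h r
      refine ⟨r * s * b - r, ?_⟩
      have e : (1 - s * x * s * r) * (1 - s * x * s * (r * s * b - r)) - 1
          = -(s * x * s * r * s * (x * s * r + b - x * s * r * s * b)) := by noncomm_ring
      rw [hb] at e
      simpa [sub_eq_zero] using e
    -- hence every `1 - s*x*s*r` is a unit
    have unit : ∀ r : R, IsUnit (1 - s * x * s * r) := by
      intro r
      obtain ⟨c, hc⟩ := key r
      obtain ⟨d, hd⟩ := key c
      refine isUnit_iff_exists.mpr ⟨1 - s * x * s * c, hc, ?_⟩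
      calc (1 - s * x * s * c) * (1 - s * x * s * r)
          = (1 - s * x * s * c) * ((1 - s * x * s * r) *
              ((1 - s * x * s * c) * (1 - s * x * s * d))) := by rw [hd, mul_one]
        _ = ((1 - s * x * s * c) * ((1 - s * x * s * r) * (1 - s * x * s * c)))
              * (1 - s * x * s * d) := by noncomm_ring
        _ = (1 - s * x * s * c) * (1 - s * x * s * d) := by rw [hc, mul_one]
        _ = 1 := hd
    intro y
    have hy : IsUnit (1 - (-y) * (s * x * s)) := isUnit_one_sub_swap (unit (-y))
    obtain ⟨v, hv⟩ := hy
    refine ⟨↑v⁻¹, ?_⟩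
    have h2 : (↑v⁻¹ : R) * (1 - (-y) * (s * x * s)) = 1 := by rw [← hv]; exact v.inv_mul
    have e : (↑v⁻¹ : R) * y * (s * x * s) + ↑v⁻¹ - 1
        = (↑v⁻¹ : R) * (1 - (-y) * (s * x * s)) - 1 := by noncomm_ring
    rw [h2, sub_self] at e
    exact e
  · intro h r
    -- every `1 + y*(s*x*s)` is a unit
    have unit2 : ∀ y : R, IsUnit (y * (s * x * s) + 1) := by
      intro y
      obtain ⟨z, hz⟩ := h y
      have hz1 : z * (y * (s * x * s) + 1) = 1 := by
        have e : z * (y * (s * x * s) + 1) - 1 = z * y * (s * x * s) + z - 1 := by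
          noncomm_ring
        rw [hz] at e
        exact sub_eq_zero.mp e
      have hzz : z = 1 + (-(z * y)) * (s * x * s) := by
        have e2 : z - (1 + (-(z * y)) * (s * x * s)) = z * y * (s * x * s) + z - 1 := by
          noncomm_ring
        rw [hz] at e2
        exact sub_eq_zero.mp e2
      obtain ⟨w, hw⟩ := h (-(z * y))
      have hw1 : w * z = 1 := by
        have e3 : w * z - 1 = w * (-(z * y)) * (s * x * s) + w - 1 := by
          nth_rewrite 1 [hzz]; noncomm_ring
        rw [hw] at e3
        exact sub_eq_zero.mp e3
      -- z has right inverse (y*sxs+1) and left inverse w, so it's a unit, and so is y*sxs+1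
      have : y * (s * x * s) + 1 = w := by
        calc y * (s * x * s) + 1 = (w * z) * (y * (s * x * s) + 1) := by rw [hw1, one_mul]
          _ = w * (z * (y * (s * x * s) + 1)) := by rw [mul_assoc]
          _ = w := by rw [hz1, mul_one]
      refine isUnit_iff_exists.mpr ⟨z, ?_, hz1⟩
      rw [this]; exact hw1
    have hswap : IsUnit (1 - (r * s) * (x * s)) := by
      have := unit2 (-r)
      have e : (-r) * (s * x * s) + 1 = 1 - (r * s) * (x * s) := by noncomm_ring
      rwa [e] at this
    have hunit : IsUnit (1 - (x * s) * (r * s)) := isUnit_one_sub_swap hswap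
    obtain ⟨v, hv⟩ := hunit
    have hv1 : (1 - (x * s) * (r * s)) * ↑v⁻¹ = 1 := by rw [← hv]; exact v.mul_inv
    refine ⟨-(↑v⁻¹ * (x * s * r)), ?_⟩
    have e : x * s * r + -(↑v⁻¹ * (x * s * r)) - x * s * r * s * -(↑v⁻¹ * (x * s * r))
        = x * s * r - ((1 - (x * s) * (r * s)) * ↑v⁻¹) * (x * s * r) := by noncomm_ring
    rw [hv1, one_mul, sub_self] at e
    exact e
end

section
/- Let R be a unital ring and s ∈ R. Then J(R) ⊆ J(R_s), where R_s is R with multiplication x ∗ y = xsy. -/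
/-- Every element of `J(⊥)` has `x + 1` a left-invertible. -/
lemma left_inv_of_mem_jacobson_bot' {R : Type*} [Ring R] {x : R}
    (hx : x ∈ Ideal.jacobson (⊥ : Ideal R)) : ∃ z : R, z * (x + 1) = 1 := by
  obtain ⟨z, hz⟩ := Ideal.mem_jacobson_iff.1 hx 1
  rw [Ideal.mem_bot] at hz
  rw [mul_one] at hz
  exact ⟨z, by rw [mul_add, mul_one]; exact sub_eq_zero.mp hz⟩

/-- Every element of the Jacobson radical gives a unit `x + 1`. -/
lemma isUnit_add_one_of_mem_jacobson_bot {R : Type*} [Ring R] {x : R}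
    (hx : x ∈ Ideal.jacobson (⊥ : Ideal R)) : IsUnit (x + 1) := by
  obtain ⟨z, hz⟩ := left_inv_of_mem_jacobson_bot' hx
  have hzJ : -(z * x) ∈ Ideal.jacobson (⊥ : Ideal R) :=
    neg_mem (Ideal.mul_mem_left _ z hx)
  obtain ⟨w, hw⟩ := left_inv_of_mem_jacobson_bot' hzJ
  have hz' : -(z * x) + 1 = z := by
    have h2 := hz
    rw [mul_add, mul_one] at h2
    rw [← h2]; abel
  rw [hz'] at hw
  have hright : (x + 1) * z = 1 := by
    have : w = x + 1 := by
      calc w = w * (z * (x + 1)) := by rw [hz, mul_one]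
        _ = (w * z) * (x + 1) := by rw [mul_assoc]
        _ = x + 1 := by rw [hw, one_mul]
    rw [← this, hw]
  exact ⟨⟨x + 1, z, hright, hz⟩, rfl⟩

/-- For `s ∈ R`, `J(R) ⊆ J(R_s)`, where `R_s` is `R` with multiplication `x ∗ y = x*s*y`. -/
theorem jacobson_subset_jacobson_deformed {R : Type*} [Ring R] (s : R) :
    (Ideal.jacobson (⊥ : Ideal R) : Set R) ⊆ jacobsonQR (fun x y : R => x * s * y) := by
  intro x hx r
  have hx' : x ∈ Ideal.jacobson (⊥ : Ideal R) := hx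
  set a := x * s * r with ha
  have has : -(a * s) ∈ Ideal.jacobson (⊥ : Ideal R) := by
    refine neg_mem ?_
    have := Ideal.mul_mem_right (s * r * s) (Ideal.jacobson (⊥ : Ideal R)) hx'
    simpa [ha, mul_assoc] using this
  obtain ⟨u, hu⟩ := isUnit_add_one_of_mem_jacobson_bot has
  refine ⟨-(↑u⁻¹ * a), ?_⟩
  have key : (↑u : R) * (↑u⁻¹ * a) = a := by
    rw [← mul_assoc, u.mul_inv, one_mul]
  have hu' : (↑u : R) = 1 - a * s := by rw [hu]; abel
  rw [hu'] at key
  show a + -(↑u⁻¹ * a) - a * s * -(↑u⁻¹ * a) = 0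
  calc a + -(↑u⁻¹ * a) - a * s * -(↑u⁻¹ * a)
      = a - (1 - a * s) * (↑u⁻¹ * a) := by noncomm_ring
    _ = 0 := by rw [key]; exact sub_self a
end

section
/- Let R be a unital ring and e ∈ R an idempotent. Then the quotient R_e/J(R_e) is isomorphic to eRe/J(eRe), where R_e is R with multiplication x ∗ y = xey, and the isomorphism is induced by x ↦ exe. -/
/-- The Jacobson radical of the ring given by a subset `A` of `R` closed under the
operations of `R`, via right quasi-regularity within `A`. -/
def jacobsonOfSubset {R : Type*} [Ring R] (A : Set R) : Set R :=
  {x ∈ A | ∀ r ∈ A, ∃ y ∈ A, x * r + y - x * r * y = 0}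

/-- For an idempotent `e`, the map `x ↦ e*x*e` is a surjection from `R_e`
(the ring `R` with multiplication `x ∗ y = x*e*y`) onto the corner ring `eRe` that is
additive and multiplicative, and its kernel condition identifies the radicals:
it induces an isomorphism `R_e/J(R_e) ≅ eRe/J(eRe)`. -/
theorem deformed_mod_jacobson_iso_corner {R : Type*} [Ring R] (e : R) (he : e * e = e) :
    (∀ x : R, e * (e * x * e) * e = e * x * e) ∧  -- lands in eRe
    (∀ y : R, e * y * e = y → ∃ x : R, e * x * e = y) ∧  -- surjective onto eRe
    (∀ x y : R, e * (x + y) * e = e * x * e + e * y * e) ∧  -- additive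
    (∀ x y : R, e * (x * e * y) * e = (e * x * e) * (e * y * e)) ∧  -- multiplicative
    (∀ x : R, x ∈ jacobsonQR (fun x y : R => x * e * y) ↔
        e * x * e ∈ jacobsonOfSubset {z : R | e * z * e = z}) := by  -- radicals correspond
  have he2 : ∀ t : R, e * (e * t) = e * t := fun t => by rw [← mul_assoc, he]
  have key : ∀ a : R, e * (e * a * e) * e = e * a * e := by
    intro a
    calc e * (e * a * e) * e = (e*e) * a * (e*e) := by noncomm_ring
    _ = e * a * e := by rw [he]
  refine ⟨key, fun y hy => ⟨y, hy⟩, fun x y => by noncomm_ring, ?_, ?_⟩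
  · intro x y
    simp only [mul_assoc, he2]
  · intro x
    simp only [jacobsonQR, jacobsonOfSubset, Set.mem_setOf_eq]
    constructor
    · intro h
      refine ⟨key x, fun r hr => ?_⟩
      have hre : r * e = r := by
        conv_lhs => rw [← hr]
        rw [mul_assoc, he, hr]
      have hre' : ∀ t : R, r * (e * t) = r * t := fun t => by rw [← mul_assoc, hre]
      obtain ⟨b, hb⟩ := h r
      have hb' : b = x * e * r * e * b - x * e * r := by
        rw [sub_eq_zero] at hb
        exact eq_sub_of_add_eq (by rw [add_comm]; exact hb)
      refine ⟨e * b * e, key b, ?_⟩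
      nth_rewrite 1 [hb']
      simp only [mul_assoc, mul_sub, sub_mul, mul_add, add_mul, he2, hre, hre']
      abel
    · rintro ⟨_, h⟩ r
      obtain ⟨c, hcA, hc⟩ := h (e * r * e) (key r)
      have hc' : c = (e*x*e) * (e*r*e) * c - (e*x*e) * (e*r*e) := by
        rw [sub_eq_zero] at hc
        exact eq_sub_of_add_eq (by rw [add_comm]; exact hc)
      refine ⟨(x*e*r)*e*c*(x*e*r) - (x*e*r)*e*(x*e*r) - (x*e*r), ?_⟩
      nth_rewrite 1 [hc']
      simp only [mul_assoc, mul_sub, sub_mul, mul_add, add_mul, he2]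
      abel
end

section
/- Let R be a unital semiprime ring and a ∈ R a regular element with aRa ⊆ soc R (e.g., a of finite rank). Then J(aRa) = {x ∈ aRa : axa = 0}. -/
/-- A right ideal of a ring, as a set. -/
def IsRightIdeal {R : Type*} [Ring R] (K : Set R) : Prop :=
  (0 : R) ∈ K ∧ (∀ x ∈ K, ∀ y ∈ K, x + y ∈ K) ∧ (∀ x ∈ K, -x ∈ K) ∧
    ∀ x ∈ K, ∀ r : R, x * r ∈ K

/-- A minimal right ideal: a nonzero right ideal with no proper nonzero right sub-ideal. -/
def IsMinimalRightIdeal {R : Type*} [Ring R] (K : Set R) : Prop :=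
  IsRightIdeal K ∧ K ≠ {0} ∧
    ∀ L : Set R, IsRightIdeal L → L ⊆ K → L = {0} ∨ L = K

/-- The right socle of `R`: the sum of all minimal right ideals of `R`. -/
def rightSocle (R : Type*) [Ring R] : Set R :=
  (AddSubgroup.closure (⋃ K ∈ {K : Set R | IsMinimalRightIdeal K}, K) : AddSubgroup R)

/-- A ring is semiprime iff `aRa = 0` implies `a = 0`. -/
def IsSemiprime (R : Type*) [Ring R] : Prop :=
  ∀ a : R, (∀ r : R, a * r * a = 0) → a = 0

section Aux

variable {R : Type*} [Ring R]

/-- "Minimal or zero" right ideal. -/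
def MinOrZero (K : Set R) : Prop :=
  IsRightIdeal K ∧ ∀ L : Set R, IsRightIdeal L → L ⊆ K → L = {0} ∨ L = K

lemma IsMinimalRightIdeal.minOrZero {K : Set R} (h : IsMinimalRightIdeal K) : MinOrZero K :=
  ⟨h.1, h.2.2⟩

/-- Brauer's lemma: a nonzero minimal right ideal in a semiprime ring is generated by
an idempotent that acts as a left identity on the ideal. -/
lemma brauer (hR : IsSemiprime R) {K : Set R} (hK : MinOrZero K)
    {k₀ : R} (hk₀K : k₀ ∈ K) (hk₀ : k₀ ≠ 0) :
    ∃ e : R, e * e = e ∧ e ∈ K ∧ ∀ x ∈ K, e * x = x := by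
  obtain ⟨⟨hK0, hKadd, hKneg, hKmul⟩, hKmin⟩ := hK
  have hex : ∃ k ∈ K, ∃ k' ∈ K, k * k' ≠ 0 := by
    by_contra h
    push_neg at h
    exact hk₀ (hR k₀ fun r => h (k₀ * r) (hKmul k₀ hk₀K r) k₀ hk₀K)
  obtain ⟨k, hkK, k', hk'K, hkk'⟩ := hex
  -- L = kK
  have hLid : IsRightIdeal {z : R | ∃ t ∈ K, z = k * t} := by
    refine ⟨⟨0, hK0, by simp⟩, ?_, ?_, ?_⟩
    · rintro x ⟨t, htK, rfl⟩ y ⟨s, hsK, rfl⟩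
      exact ⟨t + s, hKadd t htK s hsK, by rw [mul_add]⟩
    · rintro x ⟨t, htK, rfl⟩
      exact ⟨-t, hKneg t htK, by rw [mul_neg]⟩
    · rintro x ⟨t, htK, rfl⟩ r
      exact ⟨t * r, hKmul t htK r, by rw [mul_assoc]⟩
  have hLsub : {z : R | ∃ t ∈ K, z = k * t} ⊆ K := by
    rintro z ⟨t, htK, rfl⟩; exact hKmul k hkK t
  have hLK : {z : R | ∃ t ∈ K, z = k * t} = K := by
    rcases hKmin _ hLid hLsub with h | h
    · exfalso
      have : k * k' ∈ ({0} : Set R) := h ▸ ⟨k', hk'K, rfl⟩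
      exact hkk' this
    · exact h
  have hkL : k ∈ {z : R | ∃ t ∈ K, z = k * t} := hLK.symm ▸ hkK
  obtain ⟨e, heK, hke⟩ := hkL
  have hkne : k ≠ 0 := fun h => hkk' (by rw [h, zero_mul])
  -- L' = {t ∈ K | k * t = 0} = {0}
  have hL'id : IsRightIdeal {t : R | t ∈ K ∧ k * t = 0} := by
    refine ⟨⟨hK0, by simp⟩, ?_, ?_, ?_⟩
    · rintro x ⟨hxK, hx0⟩ y ⟨hyK, hy0⟩
      exact ⟨hKadd x hxK y hyK, by rw [mul_add, hx0, hy0, add_zero]⟩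
    · rintro x ⟨hxK, hx0⟩
      exact ⟨hKneg x hxK, by rw [mul_neg, hx0, neg_zero]⟩
    · rintro x ⟨hxK, hx0⟩ r
      exact ⟨hKmul x hxK r, by rw [← mul_assoc, hx0, zero_mul]⟩
  have hL'0 : {t : R | t ∈ K ∧ k * t = 0} = {0} := by
    rcases hKmin _ hL'id (fun t ht => ht.1) with h | h
    · exact h
    · exfalso
      have : e ∈ {t : R | t ∈ K ∧ k * t = 0} := h.symm ▸ heK
      rw [this.2] at hke
      exact hkne hke
  have hee : e * e = e := by
    have h1 : e * e - e ∈ {t : R | t ∈ K ∧ k * t = 0} := by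
      refine ⟨?_, ?_⟩
      · have := hKadd (e * e) (hKmul e heK e) (-e) (hKneg e heK)
        simpa [sub_eq_add_neg] using this
      · have h2 : k * (e * e - e) = (k * e) * e - k * e := by noncomm_ring
        rw [h2, ← hke, ← hke]
        exact sub_self k
    have : e * e - e ∈ ({0} : Set R) := hL'0 ▸ h1
    rw [Set.mem_singleton_iff, sub_eq_zero] at this
    exact this
  have hene : e ≠ 0 := by
    intro h
    rw [h, mul_zero] at hke
    exact hkne hke
  -- L'' = {t ∈ K | e * t = t} = K
  have hL''id : IsRightIdeal {t : R | t ∈ K ∧ e * t = t} := by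
    refine ⟨⟨hK0, by simp⟩, ?_, ?_, ?_⟩
    · rintro x ⟨hxK, hx⟩ y ⟨hyK, hy⟩
      exact ⟨hKadd x hxK y hyK, by rw [mul_add, hx, hy]⟩
    · rintro x ⟨hxK, hx⟩
      exact ⟨hKneg x hxK, by rw [mul_neg, hx]⟩
    · rintro x ⟨hxK, hx⟩ r
      exact ⟨hKmul x hxK r, by rw [← mul_assoc, hx]⟩
  have hL'' : {t : R | t ∈ K ∧ e * t = t} = K := by
    rcases hKmin _ hL''id (fun t ht => ht.1) with h | h
    · exfalso
      have : e ∈ ({0} : Set R) := h ▸ (⟨heK, hee⟩ : e ∈ {t : R | t ∈ K ∧ e * t = t})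
      exact hene this
    · exact h
  exact ⟨e, hee, heK, fun x hx => (hL''.symm ▸ hx : x ∈ {t : R | t ∈ K ∧ e * t = t}).2⟩

lemma sum_map_sub (e : R) (l : List R) :
    (l.map (fun x => x - e * x)).sum = l.sum - e * l.sum := by
  induction l with
  | nil => simp
  | cons h t ih => simp only [List.map_cons, List.sum_cons, ih, mul_add]; abel

lemma sum_map_neg'' (l : List R) :
    (l.map (fun x => -x)).sum = -l.sum := by
  induction l with
  | nil => simp
  | cons h t ih => simp only [List.map_cons, List.sum_cons, ih]; abel

lemma minOrZero_map (e : R) {K : Set R} (hK : MinOrZero K) :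
    MinOrZero {z : R | ∃ w ∈ K, z = w - e * w} := by
  obtain ⟨⟨hK0, hKadd, hKneg, hKmul⟩, hKmin⟩ := hK
  constructor
  · refine ⟨⟨0, hK0, by simp⟩, ?_, ?_, ?_⟩
    · rintro x ⟨w, hwK, rfl⟩ y ⟨w', hw'K, rfl⟩
      exact ⟨w + w', hKadd w hwK w' hw'K, by noncomm_ring⟩
    · rintro x ⟨w, hwK, rfl⟩
      exact ⟨-w, hKneg w hwK, by noncomm_ring⟩
    · rintro x ⟨w, hwK, rfl⟩ r
      exact ⟨w * r, hKmul w hwK r, by noncomm_ring⟩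
  · intro L hL hLsub
    have hPid : IsRightIdeal {w : R | w ∈ K ∧ w - e * w ∈ L} := by
      refine ⟨⟨hK0, by simpa using hL.1⟩, ?_, ?_, ?_⟩
      · rintro x ⟨hxK, hxL⟩ y ⟨hyK, hyL⟩
        refine ⟨hKadd x hxK y hyK, ?_⟩
        have h : (x + y) - e * (x + y) = (x - e * x) + (y - e * y) := by noncomm_ring
        rw [h]; exact hL.2.1 _ hxL _ hyL
      · rintro x ⟨hxK, hxL⟩
        refine ⟨hKneg x hxK, ?_⟩
        have h : (-x) - e * (-x) = -(x - e * x) := by noncomm_ring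
        rw [h]; exact hL.2.2.1 _ hxL
      · rintro x ⟨hxK, hxL⟩ r
        refine ⟨hKmul x hxK r, ?_⟩
        have h : (x * r) - e * (x * r) = (x - e * x) * r := by noncomm_ring
        rw [h]; exact hL.2.2.2 _ hxL r
    rcases hKmin _ hPid (fun w hw => hw.1) with hP | hP
    · left
      ext z
      simp only [Set.mem_singleton_iff]
      constructor
      · intro hz
        obtain ⟨w, hwK, rfl⟩ := hLsub hz
        have : w ∈ ({0} : Set R) := hP ▸ (⟨hwK, hz⟩ : w ∈ {w : R | w ∈ K ∧ w - e * w ∈ L})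
        rw [Set.mem_singleton_iff] at this
        rw [this]; simp
      · rintro rfl; exact hL.1
    · right
      refine Set.Subset.antisymm hLsub ?_
      rintro z ⟨w, hwK, rfl⟩
      have : w ∈ {w : R | w ∈ K ∧ w - e * w ∈ L} := hP.symm ▸ hwK
      exact this.2

/-- algebra helper: case d = 0 -/
lemma reg_case1 (u e v₂ : R) (h1 : u = u * (v₂ * (u - e * u))) :
    u * (v₂ - v₂ * e) * u = u := by
  calc u * (v₂ - v₂ * e) * u = u * (v₂ * (u - e * u)) := by noncomm_ring
  _ = u := h1.symm

/-- algebra helper: e * d = d -/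
lemma reg_ed (u e v₂ : R) (hc : (u - e * u) * v₂ * (u - e * u) = u - e * u) :
    e * (u - u * (v₂ * (u - e * u))) = u - u * (v₂ * (u - e * u)) := by
  have h : (u - u * (v₂ * (u - e * u))) - e * (u - u * (v₂ * (u - e * u)))
      = (u - e * u) - (u - e * u) * v₂ * (u - e * u) := by noncomm_ring
  rw [hc, sub_self] at h
  exact (sub_eq_zero.mp h).symm

/-- algebra helper: case d ≠ 0 -/
lemma reg_case2 (u e v₂ t : R)
    (hc : (u - e * u) * v₂ * (u - e * u) = u - e * u)
    (het : (u - u * (v₂ * (u - e * u))) * t = e) :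
    u * ((1 - v₂ * (u - e * u)) * t + (1 - (1 - v₂ * (u - e * u)) * t * u) * (v₂ - v₂ * e)) * u
      = u := by
  have hme : u * ((1 - v₂ * (u - e * u)) * t) = e := by
    calc u * ((1 - v₂ * (u - e * u)) * t) = (u - u * (v₂ * (u - e * u))) * t := by noncomm_ring
    _ = e := het
  calc u * ((1 - v₂ * (u - e * u)) * t + (1 - (1 - v₂ * (u - e * u)) * t * u) * (v₂ - v₂ * e)) * u
      = (u * ((1 - v₂ * (u - e * u)) * t)) * u
        + (u - (u * ((1 - v₂ * (u - e * u)) * t)) * u) * ((v₂ - v₂ * e) * u) := by noncomm_ring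
  _ = e * u + (u - e * u) * ((v₂ - v₂ * e) * u) := by rw [hme]
  _ = e * u + (u - e * u) * v₂ * (u - e * u) := by noncomm_ring
  _ = e * u + (u - e * u) := by rw [hc]
  _ = u := by noncomm_ring

lemma sum_regular (hR : IsSemiprime R) :
    ∀ (n : ℕ) (l : List R), l.length = n →
      (∀ x ∈ l, ∃ K : Set R, MinOrZero K ∧ x ∈ K) →
      ∃ v, l.sum * v * l.sum = l.sum := by
  intro n
  induction n with
  | zero =>
    intro l hl _
    rw [List.length_eq_zero_iff] at hl
    subst hl
    exact ⟨0, by simp⟩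
  | succ n ih =>
    rintro (_ | ⟨k₁, l⟩) hlen hall
    · simp at hlen
    have hlen' : l.length = n := by simpa using hlen
    obtain ⟨K₁, hK₁, hk₁K⟩ := hall k₁ List.mem_cons_self
    by_cases hk₁0 : k₁ = 0
    · obtain ⟨v, hv⟩ := ih l hlen' (fun x hx => hall x (List.mem_cons_of_mem _ hx))
      exact ⟨v, by simpa [hk₁0, List.sum_cons] using hv⟩
    · obtain ⟨e, hee, heK, habs⟩ := brauer hR hK₁ hk₁K hk₁0
      rw [List.sum_cons]
      set S := l.sum with hS
      have hek : e * k₁ = k₁ := habs k₁ hk₁K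
      have hcu : S - e * S = (k₁ + S) - e * (k₁ + S) := by
        rw [mul_add, hek]; abel
      -- apply ih to mapped list
      have hmapall : ∀ y ∈ l.map (fun x => x - e * x), ∃ K : Set R, MinOrZero K ∧ y ∈ K := by
        intro y hy
        rw [List.mem_map] at hy
        obtain ⟨x, hxl, rfl⟩ := hy
        obtain ⟨K, hKmz, hxK⟩ := hall x (List.mem_cons_of_mem _ hxl)
        exact ⟨_, minOrZero_map e hKmz, ⟨x, hxK, rfl⟩⟩
      obtain ⟨v₂, hv₂⟩ := ih (l.map (fun x => x - e * x)) (by simpa using hlen') hmapall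
      rw [sum_map_sub, ← hS, hcu] at hv₂
      -- hv₂ : ((k₁+S) - e*(k₁+S)) * v₂ * ((k₁+S) - e*(k₁+S)) = (k₁+S) - e*(k₁+S)
      set u := k₁ + S with hu
      by_cases hd0 : u - u * (v₂ * (u - e * u)) = 0
      · have h1 : u = u * (v₂ * (u - e * u)) := by
          rw [sub_eq_zero] at hd0; exact hd0
        exact ⟨v₂ - v₂ * e, reg_case1 u e v₂ h1⟩
      · have hed := reg_ed u e v₂ hv₂
        have hdK : u - u * (v₂ * (u - e * u)) ∈ K₁ := by
          rw [← hed]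
          exact hK₁.1.2.2.2 e heK _
        -- D = dR
        set d := u - u * (v₂ * (u - e * u)) with hd
        have hDid : IsRightIdeal {z : R | ∃ r : R, z = d * r} := by
          refine ⟨⟨0, by simp⟩, ?_, ?_, ?_⟩
          · rintro x ⟨r, rfl⟩ y ⟨s, rfl⟩
            exact ⟨r + s, by rw [mul_add]⟩
          · rintro x ⟨r, rfl⟩
            exact ⟨-r, by rw [mul_neg]⟩
          · rintro x ⟨r, rfl⟩ s
            exact ⟨r * s, by rw [mul_assoc]⟩
        have hDsub : {z : R | ∃ r : R, z = d * r} ⊆ K₁ := by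
          rintro z ⟨r, rfl⟩
          exact hK₁.1.2.2.2 d hdK r
        have hDK : {z : R | ∃ r : R, z = d * r} = K₁ := by
          rcases hK₁.2 _ hDid hDsub with h | h
          · exfalso
            have : d ∈ ({0} : Set R) := h ▸ ⟨1, (mul_one d).symm⟩
            exact hd0 this
          · exact h
        have heD : e ∈ {z : R | ∃ r : R, z = d * r} := hDK.symm ▸ heK
        obtain ⟨t, het⟩ := heD
        exact ⟨_, reg_case2 u e v₂ t hv₂ (by rw [← het])⟩

lemma socle_regular (hR : IsSemiprime R) (u : R) (hu : u ∈ rightSocle R) :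
    ∃ v, u * v * u = u := by
  have hrep : ∃ l : List R,
      (∀ x ∈ l, ∃ K : Set R, MinOrZero K ∧ x ∈ K) ∧ l.sum = u := by
    refine AddSubgroup.closure_induction ?_ ?_ ?_ ?_ hu
    · intro x hx
      simp only [Set.mem_iUnion, Set.mem_setOf_eq] at hx
      obtain ⟨K, hKmin, hxK⟩ := hx
      exact ⟨[x], fun y hy => by
        rw [List.mem_singleton] at hy
        exact hy ▸ ⟨K, hKmin.minOrZero, hxK⟩, by simp⟩
    · exact ⟨[], by simp, by simp⟩
    · rintro x y hx hy ⟨l₁, h₁, rfl⟩ ⟨l₂, h₂, rfl⟩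
      refine ⟨l₁ ++ l₂, ?_, by simp⟩
      intro z hz
      rcases List.mem_append.mp hz with h | h
      · exact h₁ z h
      · exact h₂ z h
    · rintro x hx ⟨l, hl, rfl⟩
      refine ⟨l.map (fun z => -z), ?_, sum_map_neg'' l⟩
      intro z hz
      rw [List.mem_map] at hz
      obtain ⟨w, hwl, rfl⟩ := hz
      obtain ⟨K, hKmz, hwK⟩ := hl w hwl
      exact ⟨K, hKmz, hKmz.1.2.2.1 w hwK⟩
  obtain ⟨l, hl, rfl⟩ := hrep
  exact sum_regular hR l.length l rfl hl

-- helpers for the main theorem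
lemma helper_uvu (u v₀ : R) (h : u * v₀ * u = u) :
    u * (v₀ * u * v₀) * u = u := by
  calc u * (v₀ * u * v₀) * u = (u * v₀ * u) * (v₀ * u) := by noncomm_ring
  _ = u * (v₀ * u) := by rw [h]
  _ = u := by rw [← mul_assoc]; exact h

lemma helper_vuv (u v₀ : R) (h : u * v₀ * u = u) :
    (v₀ * u * v₀) * u * (v₀ * u * v₀) = v₀ * u * v₀ := by
  calc (v₀ * u * v₀) * u * (v₀ * u * v₀) = v₀ * ((u * v₀ * u) * (v₀ * (u * v₀))) := by
        noncomm_ring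
  _ = v₀ * (u * (v₀ * (u * v₀))) := by rw [h]
  _ = v₀ * ((u * v₀ * u) * v₀) := by noncomm_ring
  _ = v₀ * (u * v₀) := by rw [h]
  _ = v₀ * u * v₀ := by rw [mul_assoc]

lemma helper_idem (a x v : R) (hvuv : v * (a * x * a) * v = v) :
    (x * (a * v * a)) * (x * (a * v * a)) = x * (a * v * a) := by
  calc (x * (a * v * a)) * (x * (a * v * a)) = x * (a * (v * (a * x * a) * v) * a) := by
        noncomm_ring
  _ = x * (a * v * a) := by rw [hvuv]

lemma helper_szero (s y : R) (h : s + y - s * y = 0) (hss : s * s = s) : s = 0 := by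
  have h2 := congrArg (fun z => s * z) h
  simp only [mul_zero, mul_sub, mul_add, ← mul_assoc, hss] at h2
  rwa [add_sub_cancel_right] at h2

lemma helper_final (a x v : R) (hs : x * (a * v * a) = 0)
    (huvu : (a * x * a) * v * (a * x * a) = a * x * a) : a * x * a = 0 := by
  calc a * x * a = (a * x * a) * v * (a * x * a) := huvu.symm
  _ = (a * (x * (a * v * a))) * (x * a) := by noncomm_ring
  _ = 0 := by rw [hs]; simp

lemma helper_back (a r t : R) (h0 : a * (a * r * a) * a = 0) :
    (a * r * a) * (a * t * a) * ((a * r * a) * (a * t * a)) = 0 := by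
  calc (a * r * a) * (a * t * a) * ((a * r * a) * (a * t * a))
      = (a * r * (a * (a * t))) * (a * (a * r * a) * a) * (t * a) := by noncomm_ring
  _ = 0 := by rw [h0]; simp

end Aux

/-- If `R` is semiprime, `a` is regular, and `aRa ⊆ soc R`, then
`J(aRa) = {x ∈ aRa : a*x*a = 0}`. -/
theorem jacobson_aRa_semiprime {R : Type*} [Ring R] (hR : IsSemiprime R)
    (a b : R) (hb : a * b * a = a)
    (hsoc : ∀ r : R, a * r * a ∈ rightSocle R) :
    jacobsonOfSubset {x : R | ∃ r : R, x = a * r * a} =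
      {x : R | (∃ r : R, x = a * r * a) ∧ a * x * a = 0} := by
  ext x
  simp only [jacobsonOfSubset, Set.mem_setOf_eq, Set.mem_sep_iff]
  constructor
  · rintro ⟨hxA, hqr⟩
    refine ⟨hxA, ?_⟩
    by_contra hu
    obtain ⟨v₀, hv₀⟩ := socle_regular hR (a * x * a) (hsoc x)
    set v := v₀ * (a * x * a) * v₀ with hv
    have huvu : (a * x * a) * v * (a * x * a) = a * x * a := helper_uvu _ _ hv₀
    have hvuv : v * (a * x * a) * v = v := helper_vuv _ _ hv₀
    obtain ⟨y, hyA, hy⟩ := hqr (a * v * a) ⟨v, rfl⟩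
    have hss := helper_idem a x v hvuv
    have hs0 : x * (a * v * a) = 0 := helper_szero _ y hy hss
    exact hu (helper_final a x v hs0 huvu)
  · rintro ⟨⟨r, rfl⟩, h0⟩
    refine ⟨⟨r, rfl⟩, ?_⟩
    rintro s ⟨t, rfl⟩
    refine ⟨-((a * r * a) * (a * t * a)), ⟨-(r * (a * (a * t))), by noncomm_ring⟩, ?_⟩
    have hX := helper_back a r t h0
    have h : (a * r * a) * (a * t * a) + -((a * r * a) * (a * t * a))
        - (a * r * a) * (a * t * a) * -((a * r * a) * (a * t * a))
        = (a * r * a) * (a * t * a) * ((a * r * a) * (a * t * a)) := by noncomm_ring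
    rw [h, hX]
end

section
/- Let R be a unital semiprime ring and a ∈ R a regular element such that there exist b, c ∈ R with a = a²b = ca², and such that axa ∈ soc R for all x ∈ R. Then J(aRa) = 0. -/
namespace JRAux

variable {R : Type*} [Ring R]

lemma ri_sub {K : Set R} (hK : IsRightIdeal K) {x y : R} (hx : x ∈ K) (hy : y ∈ K) :
    x - y ∈ K := by
  rw [sub_eq_add_neg]; exact hK.2.1 x hx (-y) (hK.2.2.1 y hy)

def eSet (e : R) : Set R := {x | ∃ r, x = e * r}

lemma mem_eSet_self (e : R) : e ∈ eSet e := ⟨1, (mul_one e).symm⟩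

lemma ri_eSet (e : R) : IsRightIdeal (eSet e) := by
  refine ⟨⟨0, by simp⟩, ?_, ?_, ?_⟩
  · rintro x ⟨r, rfl⟩ y ⟨s, rfl⟩; exact ⟨r + s, by rw [mul_add]⟩
  · rintro x ⟨r, rfl⟩; exact ⟨-r, by rw [mul_neg]⟩
  · rintro x ⟨r, rfl⟩ s; exact ⟨r * s, by rw [mul_assoc]⟩

lemma ri_singleton_zero : IsRightIdeal ({0} : Set R) := by
  refine ⟨rfl, ?_, ?_, ?_⟩ <;> intros <;> simp_all

lemma ri_inter {K L : Set R} (hK : IsRightIdeal K) (hL : IsRightIdeal L) :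
    IsRightIdeal (K ∩ L) := by
  refine ⟨⟨hK.1, hL.1⟩, ?_, ?_, ?_⟩
  · rintro x ⟨hx1, hx2⟩ y ⟨hy1, hy2⟩; exact ⟨hK.2.1 x hx1 y hy1, hL.2.1 x hx2 y hy2⟩
  · rintro x ⟨hx1, hx2⟩; exact ⟨hK.2.2.1 x hx1, hL.2.2.1 x hx2⟩
  · rintro x ⟨hx1, hx2⟩ r; exact ⟨hK.2.2.2 x hx1 r, hL.2.2.2 x hx2 r⟩

def setAdd (K L : Set R) : Set R := {x | ∃ k ∈ K, ∃ m ∈ L, x = k + m}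

def sumList : List (Set R) → Set R
  | [] => {0}
  | K :: l => setAdd K (sumList l)

lemma sumList_nil : sumList ([] : List (Set R)) = {0} := rfl

lemma sumList_cons (K : Set R) (l : List (Set R)) :
    sumList (K :: l) = setAdd K (sumList l) := rfl

lemma ri_setAdd {K L : Set R} (hK : IsRightIdeal K) (hL : IsRightIdeal L) :
    IsRightIdeal (setAdd K L) := by
  refine ⟨⟨0, hK.1, 0, hL.1, by simp⟩, ?_, ?_, ?_⟩
  · rintro x ⟨k1, hk1, m1, hm1, rfl⟩ y ⟨k2, hk2, m2, hm2, rfl⟩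
    exact ⟨k1 + k2, hK.2.1 k1 hk1 k2 hk2, m1 + m2, hL.2.1 m1 hm1 m2 hm2, by abel⟩
  · rintro x ⟨k, hk, m, hm, rfl⟩
    exact ⟨-k, hK.2.2.1 k hk, -m, hL.2.2.1 m hm, by abel⟩
  · rintro x ⟨k, hk, m, hm, rfl⟩ r
    exact ⟨k * r, hK.2.2.2 k hk r, m * r, hL.2.2.2 m hm r, by rw [add_mul]⟩

lemma ri_sumList {l : List (Set R)} (h : ∀ K ∈ l, IsRightIdeal K) :
    IsRightIdeal (sumList l) := by
  induction l with
  | nil => exact ri_singleton_zero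
  | cons K l ih =>
    exact ri_setAdd (h K ((List.mem_cons_self : K ∈ K :: l)))
      (ih fun K' hK' => h K' (List.mem_cons_of_mem _ hK'))

lemma mem_sumList_append {l₁ l₂ : List (Set R)} {x y : R}
    (hx : x ∈ sumList l₁) (hy : y ∈ sumList l₂) : x + y ∈ sumList (l₁ ++ l₂) := by
  induction l₁ generalizing x with
  | nil =>
    have : x = 0 := hx
    rw [this, zero_add]; exact hy
  | cons K l ih =>
    obtain ⟨k, hk, s, hs, rfl⟩ := hx
    exact ⟨k, hk, s + y, ih hs, by abel⟩

lemma neg_mem_sumList {l : List (Set R)} (hmin : ∀ K ∈ l, IsMinimalRightIdeal K)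
    {x : R} (hx : x ∈ sumList l) : -x ∈ sumList l := by
  induction l generalizing x with
  | nil =>
    have : x = 0 := hx
    rw [this, neg_zero]; exact rfl
  | cons K l ih =>
    obtain ⟨k, hk, s, hs, rfl⟩ := hx
    exact ⟨-k, (hmin K ((List.mem_cons_self : K ∈ K :: l))).1.2.2.1 k hk,
      -s, ih (fun K' h => hmin K' (List.mem_cons_of_mem _ h)) hs, by abel⟩

lemma mem_sum_of_mem_socle {z : R} (hz : z ∈ rightSocle R) :
    ∃ l : List (Set R), (∀ K ∈ l, IsMinimalRightIdeal K) ∧ z ∈ sumList l := by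
  let S : AddSubgroup R :=
    { carrier := {w | ∃ l : List (Set R), (∀ K ∈ l, IsMinimalRightIdeal K) ∧ w ∈ sumList l}
      zero_mem' := ⟨[], by simp, rfl⟩
      add_mem' := by
        rintro x y ⟨l₁, h₁, hx⟩ ⟨l₂, h₂, hy⟩
        refine ⟨l₁ ++ l₂, ?_, mem_sumList_append hx hy⟩
        intro K hK
        rcases List.mem_append.1 hK with h | h
        · exact h₁ K h
        · exact h₂ K h
      neg_mem' := by
        rintro x ⟨l, h, hx⟩
        exact ⟨l, h, neg_mem_sumList h hx⟩ }
  have hgen : (⋃ K ∈ {K : Set R | IsMinimalRightIdeal K}, K) ⊆ (S : Set R) := by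
    intro x hx
    simp only [Set.mem_iUnion, Set.mem_setOf_eq] at hx
    obtain ⟨K, hK, hxK⟩ := hx
    exact ⟨[K], by simpa using hK, ⟨x, hxK, 0, rfl, (add_zero x).symm⟩⟩
  have hz' : z ∈ AddSubgroup.closure (⋃ K ∈ {K : Set R | IsMinimalRightIdeal K}, K) := hz
  exact (AddSubgroup.closure_le S).2 hgen hz'


lemma brauer (hR : IsSemiprime R) {K : Set R} (hK : IsMinimalRightIdeal K) :
    ∃ e ∈ K, e * e = e ∧ K = eSet e := by
  obtain ⟨hKri, hKne, hKmin⟩ := hK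
  have hex : ∃ k ∈ K, ∃ κ ∈ K, k * κ ≠ 0 := by
    by_contra h
    push_neg at h
    apply hKne
    apply Set.eq_singleton_iff_unique_mem.2 ⟨hKri.1, ?_⟩
    intro x hx
    apply hR
    intro r
    exact h (x * r) (hKri.2.2.2 x hx r) x hx
  obtain ⟨k, hk, κ₀, hκ₀, hne⟩ := hex
  have hk0 : k ≠ 0 := by rintro rfl; exact hne (zero_mul κ₀)
  have hkKri : IsRightIdeal {x : R | ∃ κ ∈ K, x = k * κ} := by
    refine ⟨⟨0, hKri.1, (mul_zero k).symm⟩, ?_, ?_, ?_⟩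
    · rintro x ⟨κ1, h1, rfl⟩ y ⟨κ2, h2, rfl⟩
      exact ⟨κ1 + κ2, hKri.2.1 κ1 h1 κ2 h2, (mul_add k κ1 κ2).symm⟩
    · rintro x ⟨κ, h1, rfl⟩
      exact ⟨-κ, hKri.2.2.1 κ h1, (mul_neg k κ).symm⟩
    · rintro x ⟨κ, h1, rfl⟩ r
      exact ⟨κ * r, hKri.2.2.2 κ h1 r, mul_assoc k κ r⟩
  have hkKsub : {x : R | ∃ κ ∈ K, x = k * κ} ⊆ K := by
    rintro x ⟨κ, hκ, rfl⟩; exact hKri.2.2.2 k hk κ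
  have hkKeq : {x : R | ∃ κ ∈ K, x = k * κ} = K := by
    rcases hKmin _ hkKri hkKsub with h0 | h
    · exfalso
      apply hne
      have hmem : k * κ₀ ∈ {x : R | ∃ κ ∈ K, x = k * κ} := ⟨κ₀, hκ₀, rfl⟩
      rw [h0] at hmem
      exact hmem
    · exact h
  have hkmem : k ∈ {x : R | ∃ κ ∈ K, x = k * κ} := by rw [hkKeq]; exact hk
  obtain ⟨e, he, hke⟩ := hkmem
  have hAnnri : IsRightIdeal {x : R | x ∈ K ∧ k * x = 0} := by
    refine ⟨⟨hKri.1, mul_zero k⟩, ?_, ?_, ?_⟩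
    · rintro x ⟨h1, h2⟩ y ⟨h3, h4⟩
      exact ⟨hKri.2.1 x h1 y h3, by rw [mul_add, h2, h4, add_zero]⟩
    · rintro x ⟨h1, h2⟩
      exact ⟨hKri.2.2.1 x h1, by rw [mul_neg, h2, neg_zero]⟩
    · rintro x ⟨h1, h2⟩ r
      exact ⟨hKri.2.2.2 x h1 r, by rw [← mul_assoc, h2, zero_mul]⟩
  have hAnn0 : {x : R | x ∈ K ∧ k * x = 0} = {0} := by
    rcases hKmin _ hAnnri (fun x hx => hx.1) with h0 | hA
    · exact h0
    · exfalso
      apply hne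
      have : κ₀ ∈ {x : R | x ∈ K ∧ k * x = 0} := by rw [hA]; exact hκ₀
      exact this.2
  have hee : e * e = e := by
    have hmem : e * e - e ∈ {x : R | x ∈ K ∧ k * x = 0} := by
      refine ⟨ri_sub hKri (hKri.2.2.2 e he e) he, ?_⟩
      rw [mul_sub, ← mul_assoc, ← hke, ← hke]
      exact sub_self k
    rw [hAnn0] at hmem
    exact sub_eq_zero.mp hmem
  have he0 : e ≠ 0 := by
    rintro rfl
    rw [mul_zero] at hke
    exact hk0 hke
  have hKe : K = eSet e := by
    rcases hKmin (eSet e) (ri_eSet e) (fun x hx => by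
      obtain ⟨r, rfl⟩ := hx; exact hKri.2.2.2 e he r) with h0 | h
    · exfalso
      apply he0
      have : e ∈ eSet e := mem_eSet_self e
      rw [h0] at this
      exact this
    · exact h.symm
  exact ⟨e, he, hee, hKe⟩


lemma sum_eq_eSet (hR : IsSemiprime R) :
    ∀ l : List (Set R), (∀ K ∈ l, IsMinimalRightIdeal K) →
      ∃ e : R, e * e = e ∧ sumList l = eSet e := by
  intro l
  induction l with
  | nil =>
    intro _
    refine ⟨0, by simp, ?_⟩
    ext x
    simp [sumList, eSet, eq_comm]
  | cons K l ih =>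
    intro hmin
    obtain ⟨e, he2, hI⟩ := ih (fun K' hK' => hmin K' (List.mem_cons_of_mem _ hK'))
    have hKmin := hmin K ((List.mem_cons_self : K ∈ K :: l))
    have hK'ri : IsRightIdeal {x : R | ∃ kk ∈ K, x = kk - e * kk} := by
      refine ⟨⟨0, hKmin.1.1, by simp⟩, ?_, ?_, ?_⟩
      · rintro x ⟨k1, h1, rfl⟩ y ⟨k2, h2, rfl⟩
        exact ⟨k1 + k2, hKmin.1.2.1 k1 h1 k2 h2, by noncomm_ring⟩
      · rintro x ⟨kk, h1, rfl⟩
        exact ⟨-kk, hKmin.1.2.2.1 kk h1, by noncomm_ring⟩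
      · rintro x ⟨kk, h1, rfl⟩ r
        exact ⟨kk * r, hKmin.1.2.2.2 kk h1 r, by noncomm_ring⟩
    by_cases h0 : {x : R | ∃ kk ∈ K, x = kk - e * kk} = {0}
    · refine ⟨e, he2, ?_⟩
      ext x
      rw [sumList_cons]
      constructor
      · rintro ⟨k, hk, i, hi, rfl⟩
        rw [hI] at hi
        obtain ⟨t, rfl⟩ := hi
        have hk' : k - e * k ∈ {x : R | ∃ kk ∈ K, x = kk - e * kk} := ⟨k, hk, rfl⟩
        rw [h0] at hk'
        have hkek : k = e * k := by
          have := Set.mem_singleton_iff.mp hk'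
          exact sub_eq_zero.mp this
        exact ⟨k + t, by rw [mul_add, ← hkek]⟩
      · rintro ⟨t, rfl⟩
        exact ⟨0, hKmin.1.1, e * t, by rw [hI]; exact ⟨t, rfl⟩, (zero_add _).symm⟩
    · have hK'min : IsMinimalRightIdeal {x : R | ∃ kk ∈ K, x = kk - e * kk} := by
        refine ⟨hK'ri, h0, ?_⟩
        intro L' hL'ri hL'sub
        have hPri : IsRightIdeal {kk : R | kk ∈ K ∧ kk - e * kk ∈ L'} := by
          refine ⟨⟨hKmin.1.1, by simpa using hL'ri.1⟩, ?_, ?_, ?_⟩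
          · rintro x ⟨h1, h2⟩ y ⟨h3, h4⟩
            refine ⟨hKmin.1.2.1 x h1 y h3, ?_⟩
            have heq : (x + y) - e * (x + y) = (x - e * x) + (y - e * y) := by noncomm_ring
            rw [heq]; exact hL'ri.2.1 _ h2 _ h4
          · rintro x ⟨h1, h2⟩
            refine ⟨hKmin.1.2.2.1 x h1, ?_⟩
            have heq : (-x) - e * (-x) = -(x - e * x) := by noncomm_ring
            rw [heq]; exact hL'ri.2.2.1 _ h2
          · rintro x ⟨h1, h2⟩ r
            refine ⟨hKmin.1.2.2.2 x h1 r, ?_⟩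
            have heq : (x * r) - e * (x * r) = (x - e * x) * r := by noncomm_ring
            rw [heq]; exact hL'ri.2.2.2 _ h2 r
        rcases hKmin.2.2 _ hPri (fun x hx => hx.1) with hP0 | hPK
        · left
          apply Set.eq_singleton_iff_unique_mem.2 ⟨hL'ri.1, ?_⟩
          intro x hx
          obtain ⟨kk, hkk, rfl⟩ := hL'sub hx
          have hmem : kk ∈ {kk : R | kk ∈ K ∧ kk - e * kk ∈ L'} := ⟨hkk, hx⟩
          rw [hP0] at hmem
          rw [Set.mem_singleton_iff.mp hmem]
          simp
        · right
          apply Set.Subset.antisymm hL'sub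
          rintro x ⟨kk, hkk, rfl⟩
          have hmem : kk ∈ {kk : R | kk ∈ K ∧ kk - e * kk ∈ L'} := by rw [hPK]; exact hkk
          exact hmem.2
      obtain ⟨f, hfK', hf2, hK'f⟩ := brauer hR hK'min
      obtain ⟨κ, hκ, hfeq⟩ := hfK'
      have hef : e * f = 0 := by
        rw [hfeq, mul_sub, ← mul_assoc, he2, sub_self]
      have hge : (e + f - f * e) * e = e := by
        have h1 : (e + f - f * e) * e = e * e + f * e - f * (e * e) := by noncomm_ring
        rw [h1, he2]; abel
      have hgf : (e + f - f * e) * f = f := by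
        have h1 : (e + f - f * e) * f = e * f + f * f - f * (e * f) := by noncomm_ring
        rw [h1, hef, hf2, mul_zero]; abel
      have hg2 : (e + f - f * e) * (e + f - f * e) = e + f - f * e := by
        have h1 : (e + f - f * e) * (e + f - f * e)
            = (e + f - f * e) * e + (e + f - f * e) * f - ((e + f - f * e) * f) * e := by
          noncomm_ring
        rw [h1, hge, hgf]
      refine ⟨e + f - f * e, hg2, ?_⟩
      ext x
      rw [sumList_cons]
      constructor
      · rintro ⟨k, hk, i, hi, rfl⟩
        rw [hI] at hi
        obtain ⟨t, rfl⟩ := hi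
        have hk' : k - e * k ∈ {x : R | ∃ kk ∈ K, x = kk - e * kk} := ⟨k, hk, rfl⟩
        rw [hK'f] at hk'
        obtain ⟨w, hw⟩ := hk'
        refine ⟨f * w + e * (k + t), ?_⟩
        rw [mul_add, ← mul_assoc, ← mul_assoc, hgf, hge, ← hw]
        noncomm_ring
      · rintro ⟨r, rfl⟩
        have hmem : f * r - f * (e * r) ∈ {x : R | ∃ kk ∈ K, x = kk - e * kk} := by
          rw [hK'f]
          exact ⟨r - e * r, by rw [mul_sub]⟩
        obtain ⟨kk, hkk, hkkeq⟩ := hmem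
        refine ⟨kk, hkk, e * (r - kk), by rw [hI]; exact ⟨r - kk, rfl⟩, ?_⟩
        have h1 : (e + f - f * e) * r = e * r + (f * r - f * (e * r)) := by noncomm_ring
        rw [h1, hkkeq]
        noncomm_ring


lemma complement : ∀ l : List (Set R), (∀ K ∈ l, IsMinimalRightIdeal K) →
    ∀ M : Set R, IsRightIdeal M → M ⊆ sumList l →
    ∃ C : Set R, IsRightIdeal C ∧ C ⊆ sumList l ∧ setAdd M C = sumList l ∧
      ∀ x ∈ M, x ∈ C → x = 0 := by
  intro l
  induction l with
  | nil =>
    intro _ M hM hMsub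
    refine ⟨{0}, ri_singleton_zero, le_refl _, ?_, ?_⟩
    · ext x
      constructor
      · rintro ⟨m, hm, o, ho, rfl⟩
        have h1 : m = 0 := hMsub hm
        have h2 : o = 0 := ho
        rw [h1, h2, add_zero]
        rfl
      · intro hx
        exact ⟨0, hM.1, 0, rfl, by rw [Set.mem_singleton_iff.mp hx, add_zero]⟩
    · intro x _ hx
      exact Set.mem_singleton_iff.mp hx
  | cons K l ih =>
    intro hmin M hM hMsub
    have hKmin := hmin K ((List.mem_cons_self : K ∈ K :: l))
    have hminl : ∀ K' ∈ l, IsMinimalRightIdeal K' := fun K' h => hmin K' (List.mem_cons_of_mem _ h)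
    have hI'ri : IsRightIdeal (sumList l) := ri_sumList (fun K' h => (hminl K' h).1)
    have hIri : IsRightIdeal (sumList (K :: l)) :=
      ri_sumList (fun K' h => (hmin K' h).1)
    obtain ⟨C', hC'ri, hC'sub, hC'sum, hC'disj⟩ :=
      ih hminl (M ∩ sumList l) (ri_inter hM hI'ri) Set.inter_subset_right
    have hTri : IsRightIdeal (setAdd M C') := ri_setAdd hM hC'ri
    have hMdisjC' : ∀ x ∈ M, x ∈ C' → x = 0 := by
      intro x hxM hxC'
      exact hC'disj x ⟨hxM, hC'sub hxC'⟩ hxC'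
    rcases hKmin.2.2 (K ∩ setAdd M C') (ri_inter hKmin.1 hTri) Set.inter_subset_left
      with hcase | hcase
    · -- K ∩ T = {0} : take C = setAdd K C'
      refine ⟨setAdd K C', ri_setAdd hKmin.1 hC'ri, ?_, ?_, ?_⟩
      · rintro x ⟨k, hk, c, hc, rfl⟩
        exact ⟨k, hk, c, hC'sub hc, rfl⟩
      · apply Set.Subset.antisymm
        · rintro x ⟨m, hm, kc, hkc, rfl⟩
          obtain ⟨k, hk, c, hc, rfl⟩ := hkc
          have h1 : m ∈ sumList (K :: l) := hMsub hm
          have h2 : k ∈ sumList (K :: l) := ⟨k, hk, 0, hI'ri.1, (add_zero k).symm⟩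
          have h3 : c ∈ sumList (K :: l) := ⟨0, hKmin.1.1, c, hC'sub hc, (zero_add c).symm⟩
          exact hIri.2.1 _ h1 _ (hIri.2.1 _ h2 _ h3)
        · rintro x ⟨k, hk, i, hi, rfl⟩
          rw [← hC'sum] at hi
          obtain ⟨m, hm, c, hc, rfl⟩ := hi
          exact ⟨m, hm.1, k + c, ⟨k, hk, c, hc, rfl⟩, by abel⟩
      · intro x hxM hxC
        obtain ⟨k, hk, c, hc, hxdec⟩ := hxC
        have hxT : x ∈ setAdd M C' := ⟨x, hxM, 0, hC'ri.1, (add_zero x).symm⟩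
        have hcT : c ∈ setAdd M C' := ⟨0, hM.1, c, hc, (zero_add c).symm⟩
        have hkT : k ∈ setAdd M C' := by
          have hsub : x - c ∈ setAdd M C' := ri_sub hTri hxT hcT
          have hkeq : k = x - c := eq_sub_of_add_eq hxdec.symm
          rw [hkeq]; exact hsub
        have hk0 : k = 0 := by
          have : k ∈ K ∩ setAdd M C' := ⟨hk, hkT⟩
          rw [hcase] at this
          exact Set.mem_singleton_iff.mp this
        rw [hk0, zero_add] at hxdec
        rw [hxdec]
        exact hMdisjC' c (hxdec ▸ hxM) hc
    · -- K ⊆ T : take C = C'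
      have hKT : K ⊆ setAdd M C' := by
        intro x hx
        rw [← hcase] at hx
        exact hx.2
      refine ⟨C', hC'ri, ?_, ?_, hMdisjC'⟩
      · intro c hc
        exact ⟨0, hKmin.1.1, c, hC'sub hc, (zero_add c).symm⟩
      · apply Set.Subset.antisymm
        · rintro x ⟨m, hm, c, hc, rfl⟩
          have h1 : m ∈ sumList (K :: l) := hMsub hm
          have h3 : c ∈ sumList (K :: l) := ⟨0, hKmin.1.1, c, hC'sub hc, (zero_add c).symm⟩
          exact hIri.2.1 _ h1 _ h3
        · rintro x ⟨k, hk, i, hi, rfl⟩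
          obtain ⟨m1, hm1, c1, hc1, hkdec⟩ := hKT hk
          rw [← hC'sum] at hi
          obtain ⟨m2, hm2, c2, hc2, hidec⟩ := hi
          refine ⟨m1 + m2, hM.2.1 _ hm1 _ hm2.1, c1 + c2, hC'ri.2.1 _ hc1 _ hc2, ?_⟩
          rw [hkdec, hidec]; abel

lemma socle_regular (hR : IsSemiprime R) {z : R} (hz : z ∈ rightSocle R) :
    ∃ y, z * y * z = z := by
  obtain ⟨l, hmin, hzl⟩ := mem_sum_of_mem_socle hz
  obtain ⟨e, he2, hIe⟩ := sum_eq_eSet hR l hmin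
  have hriI : IsRightIdeal (sumList l) := ri_sumList (fun K' h => (hmin K' h).1)
  have hMsub : eSet z ⊆ sumList l := by
    rintro x ⟨r, rfl⟩
    exact hriI.2.2.2 z hzl r
  obtain ⟨C, hCri, hCsub, hCsum, hCdisj⟩ := complement l hmin (eSet z) (ri_eSet z) hMsub
  have heI : e ∈ setAdd (eSet z) C := by
    rw [hCsum, hIe]; exact mem_eSet_self e
  obtain ⟨m₀, hm₀, c₀, hc₀, hedec⟩ := heI
  obtain ⟨y, hy⟩ := hm₀
  have hez : e * z = z := by
    obtain ⟨t, ht⟩ : z ∈ eSet e := by rw [← hIe]; exact hzl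
    rw [ht, ← mul_assoc, he2]
  have hsplit : z = m₀ * z + c₀ * z := by
    rw [← add_mul, ← hedec, hez]
  have hc₀zC : c₀ * z ∈ C := hCri.2.2.2 c₀ hc₀ z
  have h1 : c₀ * z = z - m₀ * z := by
    rw [eq_sub_iff_add_eq, add_comm]; exact hsplit.symm
  have hc₀zM : c₀ * z ∈ eSet z := by
    refine ⟨1 - y * z, ?_⟩
    rw [h1, hy]
    noncomm_ring
  have hc₀z0 : c₀ * z = 0 := hCdisj _ hc₀zM hc₀zC
  refine ⟨y, ?_⟩
  rw [hy] at hsplit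
  rw [hc₀z0, add_zero] at hsplit
  exact hsplit.symm


end JRAux

open JRAux in
/-- If `R` is semiprime, `a` is regular, `a = a²b = ca²` for some `b, c ∈ R`, and
`a*x*a ∈ soc R` for all `x ∈ R`, then `J(aRa) = 0`. -/
theorem jacobson_aRa_eq_zero {R : Type*} [Ring R] (hR : IsSemiprime R)
    (a d b c : R) (hd : a * d * a = a)
    (hb : a = a * a * b) (hc : a = c * (a * a))
    (hsoc : ∀ x : R, a * x * a ∈ rightSocle R) :
    jacobsonOfSubset {x : R | ∃ r : R, x = a * r * a} = {0} := by
  have hux : ∀ t : R, c * a * (a * t * a) = a * t * a := by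
    intro t
    have h1 : c * a * (a * t * a) = c * (a * a) * (t * a) := by noncomm_ring
    rw [h1, ← hc, mul_assoc]
  have hxu : ∀ t : R, a * t * a * (a * b) = a * t * a := by
    intro t
    have h1 : a * t * a * (a * b) = a * t * (a * a * b) := by noncomm_ring
    rw [h1, ← hb]
  ext x
  simp only [jacobsonOfSubset, Set.mem_setOf_eq, Set.mem_singleton_iff]
  constructor
  · rintro ⟨⟨s, rfl⟩, hq⟩
    set z := a * s * a with hzdef
    have hzsoc : z ∈ rightSocle R := by rw [hzdef]; exact hsoc s
    obtain ⟨y, hy⟩ := socle_regular hR hzsoc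
    have hcz : c * a * z = z := by rw [hzdef]; exact hux s
    have hzu : z * (a * b) = z := by rw [hzdef]; exact hxu s
    have hr₀A : ∃ r : R, (a * b) * (y * z * y) * (c * a) = a * r * a :=
      ⟨b * (y * z * y) * c, by noncomm_ring⟩
    obtain ⟨y', -, heq⟩ := hq ((a * b) * (y * z * y) * (c * a)) hr₀A
    have he' : z * ((a * b) * (y * z * y) * (c * a)) = z * y * (c * a) := by
      have h1 : z * ((a * b) * (y * z * y) * (c * a))
          = (z * (a * b)) * ((y * z * y) * (c * a)) := by noncomm_ring
      rw [h1, hzu]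
      have h2 : z * ((y * z * y) * (c * a)) = (z * y * z) * (y * (c * a)) := by noncomm_ring
      rw [h2, hy, ← mul_assoc]
    have hw2 : (z * y * (c * a)) * (z * y * (c * a)) = z * y * (c * a) := by
      have h1 : (z * y * (c * a)) * (z * y * (c * a))
          = z * y * ((c * a * z) * (y * (c * a))) := by noncomm_ring
      rw [h1, hcz]
      have h2 : z * y * (z * (y * (c * a))) = (z * y * z) * (y * (c * a)) := by noncomm_ring
      rw [h2, hy, ← mul_assoc]
    rw [he'] at heq
    have hw0 : z * y * (c * a) = 0 := by
      have h0 := congrArg (fun t => (z * y * (c * a)) * t) heq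
      simp only [mul_zero, mul_add, mul_sub] at h0
      have hassoc : (z * y * (c * a)) * ((z * y * (c * a)) * y')
          = ((z * y * (c * a)) * (z * y * (c * a))) * y' := (mul_assoc _ _ _).symm
      rw [hassoc, hw2] at h0
      simpa using h0
    calc z = z * y * z := hy.symm
      _ = z * y * (c * a * z) := by rw [hcz]
      _ = z * y * (c * a) * z := by noncomm_ring
      _ = 0 * z := by rw [hw0]
      _ = 0 := zero_mul z
  · rintro rfl
    refine ⟨⟨0, by simp⟩, fun r hr => ⟨0, ⟨0, by simp⟩, by simp⟩⟩
end

section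
/- Let R be a unital ring and f ∈ R an idempotent such that f = f₁ + ⋯ + fₙ for pairwise orthogonal idempotents fᵢ each of which generates a minimal right ideal fᵢR. Then for every right ideal K of R, (f) ∩ K = K·(f), where (f) is the two-sided ideal generated by f. -/
/-- The product `K · I` of a right ideal `K` (as a set) and an ideal `I` (as a set):
finite sums of products `k * x` with `k ∈ K`, `x ∈ I`. -/
def setProd {R : Type*} [Ring R] (K I : Set R) : Set R :=
  (AddSubgroup.closure {y : R | ∃ k ∈ K, ∃ x ∈ I, y = k * x} : AddSubgroup R)

/-- Sum of a list of "triples" `(v, i, r)`, each contributing `v * g i * r`. -/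
private def sumL {R : Type*} [Ring R] {n : ℕ} (g : Fin n → R) (L : List (R × Fin n × R)) : R :=
  (L.map fun p => p.1 * g p.2.1 * p.2.2).sum

private lemma sumL_nil {R : Type*} [Ring R] {n : ℕ} (g : Fin n → R) : sumL g ([] : List (R × Fin n × R)) = 0 := rfl

private lemma sumL_cons {R : Type*} [Ring R] {n : ℕ} (g : Fin n → R) (p : R × Fin n × R)
    (L : List (R × Fin n × R)) : sumL g (p :: L) = p.1 * g p.2.1 * p.2.2 + sumL g L := by
  simp [sumL]

/-- Every element of the two-sided ideal generated by `f = ∑ g i` is a finite sum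
of elements `v * g i * r`. -/
private lemma mem_span_list {R : Type*} [Ring R] (f : R) {n : ℕ} (g : Fin n → R)
    (hsum : f = ∑ i, g i) {a : R} (ha : a ∈ TwoSidedIdeal.span {f}) :
    ∃ L : List (R × Fin n × R), a = sumL g L := by
  set E : Set R := {a | ∃ L : List (R × Fin n × R), a = sumL g L} with hE
  have h0 : (0 : R) ∈ E := ⟨[], (sumL_nil g).symm⟩
  have hadd : ∀ {x y : R}, x ∈ E → y ∈ E → x + y ∈ E := by
    rintro x y ⟨L₁, rfl⟩ ⟨L₂, rfl⟩
    exact ⟨L₁ ++ L₂, by simp [sumL]⟩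
  have hneg : ∀ {x : R}, x ∈ E → -x ∈ E := by
    rintro x ⟨L, rfl⟩
    refine ⟨L.map fun p => (-p.1, p.2), ?_⟩
    induction L with
    | nil => simp [sumL]
    | cons p L ih =>
      rw [List.map_cons, sumL_cons, sumL_cons, neg_add, ← ih]
      simp
  have hmull : ∀ {x y : R}, y ∈ E → x * y ∈ E := by
    rintro x y ⟨L, rfl⟩
    refine ⟨L.map fun p => (x * p.1, p.2), ?_⟩
    induction L with
    | nil => simp [sumL]
    | cons p L ih =>
      rw [List.map_cons, sumL_cons, sumL_cons, mul_add, ← ih]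
      simp [mul_assoc]
  have hmulr : ∀ {x y : R}, x ∈ E → x * y ∈ E := by
    rintro x y ⟨L, rfl⟩
    refine ⟨L.map fun p => (p.1, p.2.1, p.2.2 * y), ?_⟩
    induction L with
    | nil => simp [sumL]
    | cons p L ih =>
      rw [List.map_cons, sumL_cons, sumL_cons, add_mul, ← ih]
      simp [mul_assoc]
  have hf : f ∈ E := by
    refine ⟨List.ofFn fun i => ((1 : R), i, (1 : R)), ?_⟩
    rw [hsum]
    simp [sumL, List.map_ofFn, Function.comp, List.sum_ofFn]
  have key := TwoSidedIdeal.mem_span_iff.mp ha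
    (TwoSidedIdeal.mk' E h0 hadd hneg hmull hmulr)
    (by
      intro z hz
      rw [Set.mem_singleton_iff] at hz
      subst hz
      rw [SetLike.mem_coe, TwoSidedIdeal.mem_mk']
      exact hf)
  rwa [TwoSidedIdeal.mem_mk'] at key

private lemma sumL_sub_mul {R : Type*} [Ring R] {n : ℕ} (g : Fin n → R) (t : R)
    (L : List (R × Fin n × R)) :
    sumL g (L.map fun p => (p.1, p.2.1, p.2.2 - p.2.2 * t)) = sumL g L - sumL g L * t := by
  induction L with
  | nil => simp [sumL]
  | cons p L ih =>
    rw [List.map_cons, sumL_cons, sumL_cons, ih]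
    rw [mul_sub, ← mul_assoc, add_mul]
    abel

/-- Key lemma: any nonzero element `x = v * g i * r` of the minimal right ideal `v * (g i) * R`
admits `t` in the ideal `(f)` with `x * t = x`. -/
private lemma exists_unit {R : Type*} [Ring R] (f : R) {n : ℕ} (g : Fin n → R)
    (hsum : f = ∑ i, g i) (hidem : ∀ i, g i * g i = g i)
    (horth : ∀ i j, i ≠ j → g i * g j = 0)
    (hmin : ∀ i, IsMinimalRightIdeal {x : R | ∃ r : R, x = g i * r})
    (i : Fin n) (v r : R) (hx : v * g i * r ≠ 0) :
    ∃ t, t ∈ TwoSidedIdeal.span {f} ∧ (v * g i * r) * t = v * g i * r := by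
  set x := v * g i * r with hxdef
  have hfg : f * g i = g i := by
    rw [hsum, Finset.sum_mul, Finset.sum_eq_single i (fun j _ hj => horth j i hj) (by simp)]
    exact hidem i
  have hfI : f ∈ TwoSidedIdeal.span {f} :=
    TwoSidedIdeal.subset_span (Set.mem_singleton f)
  have hgI : g i ∈ TwoSidedIdeal.span {f} := by
    rw [← hfg]; exact TwoSidedIdeal.mul_mem_right _ _ _ hfI
  -- the right ideal generated by x
  set Xs : Set R := {w | ∃ c : R, ∃ k : ℤ, w = x * c + k • x} with hXs
  -- the right sub-ideal of g i * R pulled back along left multiplication by v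
  set L : Set R := {z | (∃ s, z = g i * s) ∧ v * z ∈ Xs} with hLdef
  have hL : IsRightIdeal L := by
    refine ⟨⟨⟨0, by simp⟩, ⟨0, 0, by simp⟩⟩, ?_, ?_, ?_⟩
    · rintro z₁ ⟨⟨s₁, rfl⟩, c₁, k₁, h₁⟩ z₂ ⟨⟨s₂, rfl⟩, c₂, k₂, h₂⟩
      refine ⟨⟨s₁ + s₂, by rw [mul_add]⟩, c₁ + c₂, k₁ + k₂, ?_⟩
      rw [mul_add, h₁, h₂, mul_add, add_smul]
      abel
    · rintro z ⟨⟨s, rfl⟩, c, k, h⟩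
      refine ⟨⟨-s, by rw [mul_neg]⟩, -c, -k, ?_⟩
      rw [mul_neg, h, mul_neg, neg_smul]
      abel
    · rintro z ⟨⟨s, rfl⟩, c, k, h⟩ r'
      refine ⟨⟨s * r', by rw [mul_assoc]⟩, c * r' + k • r', 0, ?_⟩
      rw [← mul_assoc, h, add_mul, smul_mul_assoc, mul_add, ← mul_assoc, mul_smul_comm]
      simp
  have hLsub : L ⊆ {x : R | ∃ r : R, x = g i * r} := fun z hz => hz.1
  have hgr : g i * r ∈ L := by
    refine ⟨⟨r, rfl⟩, 0, 1, ?_⟩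
    rw [← mul_assoc]
    simp [hxdef]
  rcases (hmin i).2.2 L hL hLsub with h0 | hfull
  · exfalso
    rw [h0, Set.mem_singleton_iff] at hgr
    apply hx
    rw [hxdef, mul_assoc, hgr, mul_zero]
  · have hgiL : g i ∈ L := by
      rw [hfull]
      exact ⟨g i, (hidem i).symm⟩
    obtain ⟨_, c, k, hvg⟩ := hgiL
    refine ⟨c * (g i * r) + k • (g i * r), ?_, ?_⟩
    · have h1 : g i * r ∈ TwoSidedIdeal.span {f} := TwoSidedIdeal.mul_mem_right _ _ _ hgI
      exact add_mem (TwoSidedIdeal.mul_mem_left _ _ _ h1) (TwoSidedIdeal.zsmul_mem _ k h1)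
    · have key : (v * g i) * (g i * r) = x := by
        rw [← mul_assoc, mul_assoc v (g i) (g i), hidem i]
      calc x * (c * (g i * r) + k • (g i * r))
          = (x * c + k • x) * (g i * r) := by
            rw [mul_add, mul_smul_comm, ← mul_assoc x c (g i * r), add_mul, smul_mul_assoc]
        _ = (v * g i) * (g i * r) := by rw [← hvg]
        _ = x := key

/-- If the idempotent `f` is a sum of pairwise orthogonal idempotents `fᵢ`, each generating
a minimal right ideal `fᵢR`, then for every right ideal `K` of `R` we have
`(f) ∩ K = K·(f)`, where `(f)` is the two-sided ideal generated by `f`. -/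
theorem ideal_cap_right_ideal {R : Type*} [Ring R] (f : R) (hf : f * f = f)
    (n : ℕ) (g : Fin n → R) (hsum : f = ∑ i, g i)
    (hidem : ∀ i, g i * g i = g i)
    (horth : ∀ i j, i ≠ j → g i * g j = 0)
    (hmin : ∀ i, IsMinimalRightIdeal {x : R | ∃ r : R, x = g i * r})
    (K : Set R) (hK : IsRightIdeal K) :
    (TwoSidedIdeal.span {f} : Set R) ∩ K = setProd K (TwoSidedIdeal.span {f} : Set R) := by
  classical
  obtain ⟨hK0, hKadd, hKneg, hKmul⟩ := hK
  ext a
  simp only [Set.mem_inter_iff, setProd, SetLike.mem_coe]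
  constructor
  · rintro ⟨haI, haK⟩
    obtain ⟨L, hL⟩ := mem_span_list f g hsum haI
    have main : ∀ (m : ℕ) (L : List (R × Fin n × R)) (a : R), L.length = m → a ∈ K →
        a = sumL g L →
        a ∈ AddSubgroup.closure
          {y : R | ∃ k ∈ K, ∃ x ∈ TwoSidedIdeal.span {f}, y = k * x} := by
      intro m
      induction m with
      | zero =>
        intro L a hlen haK heq
        rw [List.length_eq_zero_iff] at hlen
        subst hlen
        rw [sumL_nil] at heq
        subst heq
        exact AddSubgroup.zero_mem _
      | succ m ih =>
        intro L a hlen haK heq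
        cases L with
        | nil => simp at hlen
        | cons p L' =>
          by_cases hx0 : p.1 * g p.2.1 * p.2.2 = 0
          · refine ih L' a (by simpa using hlen) haK ?_
            rw [heq, sumL_cons, hx0, zero_add]
          · obtain ⟨t, ht, hxt⟩ := exists_unit f g hsum hidem horth hmin p.2.1 p.1 p.2.2 hx0
            have hatK : a * t ∈ K := hKmul a haK t
            have hat : a * t ∈ AddSubgroup.closure
                {y : R | ∃ k ∈ K, ∃ x ∈ TwoSidedIdeal.span {f}, y = k * x} :=
              AddSubgroup.subset_closure ⟨a, haK, t, ht, rfl⟩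
            have hbK : a - a * t ∈ K := by
              rw [sub_eq_add_neg]
              exact hKadd a haK _ (hKneg _ hatK)
            have hbeq : a - a * t
                = sumL g (L'.map fun p => (p.1, p.2.1, p.2.2 - p.2.2 * t)) := by
              rw [sumL_sub_mul, heq, sumL_cons, add_mul, hxt]
              abel
            have hb := ih _ _ (by simpa using hlen) hbK hbeq
            have hsplit : a = (a - a * t) + a * t := by abel
            rw [hsplit]
            exact AddSubgroup.add_mem _ hb hat
    exact main L.length L a rfl haK hL
  · intro h
    refine AddSubgroup.closure_induction (fun y hy => ?_) ?_
      (fun y z _ _ hy hz => ?_) (fun y _ hy => ?_) h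
    · obtain ⟨k, hk, t, ht, rfl⟩ := hy
      exact ⟨TwoSidedIdeal.mul_mem_left _ _ _ ht, hKmul k hk t⟩
    · exact ⟨zero_mem _, hK0⟩
    · exact ⟨add_mem hy.1 hz.1, hKadd _ hy.2 _ hz.2⟩
    · exact ⟨neg_mem hy.1, hKneg _ hy.2⟩
end

section
/- Let R be a unital ring and e, f₀, f₁, f₂ ∈ R pairwise orthogonal-compatible idempotents with e = f₀ + f₁ + f₂, f₀f₁ = f₁f₀ = f₀f₂ = f₂f₀ = f₁f₂ = f₂f₁ = 0, and f₁Rf₂ = f₂Rf₁ = 0. Set f = f₁ + f₂ and consider the ring S = (eRe, ∗) with x ∗ y = xfy. Then for j ∈ {1,2}, the two-sided ideal Iⱼ of S generated by fⱼ equals fⱼRfⱼ + fⱼRf₀ + f₀Rfⱼ + f₀RfⱼRf₀, and Nⱼ = fⱼRf₀ + f₀Rfⱼ + f₀RfⱼRf₀ is an ideal of Iⱼ satisfying Iⱼ ∗ Nⱼ ∗ Iⱼ = 0 (so Nⱼ³ = 0 in S). -/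
/-- `I` is a two-sided ideal of the (generally non-unital) ring on the subset `S` of `R`
with deformed multiplication `x ∗ y = x * f * y`. -/
def IsIdealIn {R : Type*} [Ring R] (f : R) (S I : Set R) : Prop :=
  I ⊆ S ∧ (0 : R) ∈ I ∧ (∀ x ∈ I, ∀ y ∈ I, x + y ∈ I) ∧ (∀ x ∈ I, -x ∈ I) ∧
    ∀ x ∈ I, ∀ y ∈ S, x * f * y ∈ I ∧ y * f * x ∈ I

/-- The two-sided ideal of the ring `(S, ∗)`, `x ∗ y = x * f * y`, generated by `g`. -/
def genIdealIn {R : Type*} [Ring R] (f : R) (S : Set R) (g : R) : Set R :=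
  ⋂₀ {I : Set R | IsIdealIn f S I ∧ g ∈ I}

/-- The conclusion of the key lemma for a single index `j`: in `S = (eRe, ∗)` with
`x ∗ y = x * f * y`, the ideal `Iⱼ` generated by `fⱼ` equals
`fⱼRfⱼ + fⱼRf₀ + f₀Rfⱼ + f₀RfⱼRf₀`, and `Nⱼ = fⱼRf₀ + f₀Rfⱼ + f₀RfⱼRf₀` is an ideal of
`Iⱼ` with `Iⱼ ∗ Nⱼ ∗ Iⱼ = 0` (hence `Nⱼ³ = 0` in `S`). -/
def CornerIdealConcl {R : Type*} [Ring R] (e f₀ fj f : R) : Prop :=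
  letI S : Set R := {x : R | e * x * e = x}
  letI Ij : Set R := genIdealIn f S fj
  letI Nj : Set R := (AddSubgroup.closure
      ({x : R | ∃ r : R, x = fj * r * f₀} ∪ {x : R | ∃ r : R, x = f₀ * r * fj} ∪
        {x : R | ∃ r s : R, x = f₀ * r * fj * s * f₀}) : AddSubgroup R)
  Ij = (AddSubgroup.closure
      ({x : R | ∃ r : R, x = fj * r * fj} ∪ {x : R | ∃ r : R, x = fj * r * f₀} ∪
        {x : R | ∃ r : R, x = f₀ * r * fj} ∪
        {x : R | ∃ r s : R, x = f₀ * r * fj * s * f₀}) : AddSubgroup R) ∧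
  Nj ⊆ Ij ∧ (∀ x ∈ Ij, ∀ y ∈ Nj, x * f * y ∈ Nj ∧ y * f * x ∈ Nj) ∧
  (∀ x ∈ Ij, ∀ y ∈ Nj, ∀ z ∈ Ij, x * f * y * f * z = 0) ∧
  (∀ x ∈ Nj, ∀ y ∈ Nj, ∀ z ∈ Nj, x * f * y * f * z = 0)

theorem corner_key {R : Type*} [Ring R] (e f₀ fj fk : R)
    (he : e * e = e) (h0 : f₀ * f₀ = f₀) (hj : fj * fj = fj) (hk : fk * fk = fk)
    (hsum : e = f₀ + fj + fk)
    (h0j : f₀ * fj = 0) (hj0 : fj * f₀ = 0) (h0k : f₀ * fk = 0) (hk0 : fk * f₀ = 0)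
    (hjk : fj * fk = 0) (hkj : fk * fj = 0)
    (hjRk : ∀ r : R, fj * r * fk = 0) (hkRj : ∀ r : R, fk * r * fj = 0) :
    CornerIdealConcl e f₀ fj (fj + fk) := by
  have ext : ∀ {a b c : R}, a * b = c → ∀ x : R, a * (b * x) = c * x := by
    intro a b c h x; rw [← mul_assoc, h]
  have ext0 : ∀ {a b : R}, a * b = 0 → ∀ x : R, a * (b * x) = 0 := by
    intro a b h x; rw [← mul_assoc, h, zero_mul]
  have X0 := ext h0
  have Xj := ext hj
  have Xk := ext hk
  have Xe := ext he
  have Z0j := ext0 h0j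
  have Zj0 := ext0 hj0
  have Z0k := ext0 h0k
  have Zk0 := ext0 hk0
  have Zjk := ext0 hjk
  have Zkj := ext0 hkj
  have hJK1 : ∀ a : R, fj * (a * fk) = 0 := fun a => by rw [← mul_assoc, hjRk]
  have hKJ1 : ∀ a : R, fk * (a * fj) = 0 := fun a => by rw [← mul_assoc, hkRj]
  have hJK2 : ∀ a x : R, fj * (a * (fk * x)) = 0 := fun a x => by
    rw [← mul_assoc, ← mul_assoc, hjRk, zero_mul]
  have hKJ2 : ∀ a x : R, fk * (a * (fj * x)) = 0 := fun a x => by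
    rw [← mul_assoc, ← mul_assoc, hkRj, zero_mul]
  set Sset : Set R := {x : R | e * x * e = x} with hSset
  set T : AddSubgroup R := AddSubgroup.closure
      ({x : R | ∃ r : R, x = fj * r * fj} ∪ {x : R | ∃ r : R, x = fj * r * f₀} ∪
        {x : R | ∃ r : R, x = f₀ * r * fj} ∪
        {x : R | ∃ r s : R, x = f₀ * r * fj * s * f₀}) with hT
  set N : AddSubgroup R := AddSubgroup.closure
      ({x : R | ∃ r : R, x = fj * r * f₀} ∪ {x : R | ∃ r : R, x = f₀ * r * fj} ∪
        {x : R | ∃ r s : R, x = f₀ * r * fj * s * f₀}) with hN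
  -- generator memberships
  have mA : ∀ r : R, fj * r * fj ∈ T := fun r =>
    AddSubgroup.subset_closure (Or.inl (Or.inl (Or.inl ⟨r, rfl⟩)))
  have mBT : ∀ r : R, fj * r * f₀ ∈ T := fun r =>
    AddSubgroup.subset_closure (Or.inl (Or.inl (Or.inr ⟨r, rfl⟩)))
  have mCT : ∀ r : R, f₀ * r * fj ∈ T := fun r =>
    AddSubgroup.subset_closure (Or.inl (Or.inr ⟨r, rfl⟩))
  have mDT : ∀ r s : R, f₀ * r * fj * s * f₀ ∈ T := fun r s =>
    AddSubgroup.subset_closure (Or.inr ⟨r, s, rfl⟩)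
  have mBN : ∀ r : R, fj * r * f₀ ∈ N := fun r =>
    AddSubgroup.subset_closure (Or.inl (Or.inl ⟨r, rfl⟩))
  have mCN : ∀ r : R, f₀ * r * fj ∈ N := fun r =>
    AddSubgroup.subset_closure (Or.inl (Or.inr ⟨r, rfl⟩))
  have mDN : ∀ r s : R, f₀ * r * fj * s * f₀ ∈ N := fun r s =>
    AddSubgroup.subset_closure (Or.inr ⟨r, s, rfl⟩)
  have hfjT : fj ∈ T := by have := mA 1; rwa [mul_one, hj] at this
  have hfjS : fj ∈ Sset := by
    show e * fj * e = fj
    simp only [hsum, mul_add, add_mul, mul_assoc, X0, Xj, Xk, Z0j, Zj0, Z0k, Zk0, Zjk, Zkj, hJK1, hJK2, hKJ1, hKJ2, h0, hj, hk, h0j, hj0, h0k, hk0, hjk, hkj, mul_zero, zero_mul, add_zero, zero_add]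
  have hS : ∀ a : R, e * a * e ∈ Sset := by
    intro a; show e * (e * a * e) * e = e * a * e
    simp only [mul_assoc, Xe, he]
  have hNT : (N : Set R) ⊆ (T : Set R) := by
    intro x hx
    rw [hN] at hx
    rw [hT]
    refine AddSubgroup.closure_mono ?_ hx
    rintro x ((h | h) | h)
    · exact Or.inl (Or.inl (Or.inr h))
    · exact Or.inl (Or.inr h)
    · exact Or.inr h
  -- T ⊆ S
  have hTS : (T : Set R) ⊆ Sset := by
    intro x hx
    rw [hT] at hx
    induction hx using AddSubgroup.closure_induction with
    | mem x hx =>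
      obtain ((⟨r, rfl⟩ | ⟨r, rfl⟩) | ⟨r, rfl⟩) | ⟨r, s, rfl⟩ := hx <;>
        · show e * _ * e = _
          simp only [hsum, mul_add, add_mul, mul_assoc, X0, Xj, Xk, Z0j, Zj0, Z0k, Zk0, Zjk, Zkj, hJK1, hJK2, hKJ1, hKJ2, h0, hj, hk, h0j, hj0, h0k, hk0, hjk, hkj, mul_zero, zero_mul, add_zero, zero_add]
    | zero => show e * 0 * e = 0; rw [mul_zero, zero_mul]
    | add x y hxc hyc ihx ihy =>
      have ihx' : e * x * e = x := ihx
      have ihy' : e * y * e = y := ihy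
      show e * (x + y) * e = x + y
      rw [mul_add, add_mul, ihx', ihy']
    | neg x hxc ihx =>
      have ihx' : e * x * e = x := ihx
      show e * (-x) * e = -x
      rw [mul_neg, neg_mul, ihx']
  -- ideal property of T
  have hTmul : ∀ x ∈ (T : Set R), ∀ y ∈ Sset,
      x * (fj + fk) * y ∈ (T : Set R) ∧ y * (fj + fk) * x ∈ (T : Set R) := by
    intro x hx
    rw [hT] at hx
    induction hx using AddSubgroup.closure_induction with
    | mem x hx =>
      intro y hy
      have hy' : e * y * e = y := hy
      obtain ((⟨r, rfl⟩ | ⟨r, rfl⟩) | ⟨r, rfl⟩) | ⟨r, s, rfl⟩ := hx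
      · constructor
        · have key : fj * r * fj * (fj + fk) * y
              = fj * (r * (fj * y)) * f₀ + fj * (r * (fj * y)) * fj := by
            conv_lhs => rw [← hy']
            simp only [hsum, mul_add, add_mul, mul_assoc, X0, Xj, Xk, Z0j, Zj0, Z0k, Zk0, Zjk, Zkj, hJK1, hJK2, hKJ1, hKJ2, h0, hj, hk, h0j, hj0, h0k, hk0, hjk, hkj, mul_zero, zero_mul, add_zero, zero_add]
          rw [key]; exact add_mem (mBT _) (mA _)
        · have key : y * (fj + fk) * (fj * r * fj)
              = f₀ * (y * fj * r) * fj + fj * (y * fj * r) * fj := by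
            conv_lhs => rw [← hy']
            simp only [hsum, mul_add, add_mul, mul_assoc, X0, Xj, Xk, Z0j, Zj0, Z0k, Zk0, Zjk, Zkj, hJK1, hJK2, hKJ1, hKJ2, h0, hj, hk, h0j, hj0, h0k, hk0, hjk, hkj, mul_zero, zero_mul, add_zero, zero_add]
          rw [key]; exact add_mem (mCT _) (mA _)
      · constructor
        · have key : fj * r * f₀ * (fj + fk) * y = 0 := by
            simp only [hsum, mul_add, add_mul, mul_assoc, X0, Xj, Xk, Z0j, Zj0, Z0k, Zk0, Zjk, Zkj, hJK1, hJK2, hKJ1, hKJ2, h0, hj, hk, h0j, hj0, h0k, hk0, hjk, hkj, mul_zero, zero_mul, add_zero, zero_add]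
          rw [key]; exact zero_mem T
        · have key : y * (fj + fk) * (fj * r * f₀)
              = f₀ * y * fj * r * f₀ + fj * (y * fj * r) * f₀ := by
            conv_lhs => rw [← hy']
            simp only [hsum, mul_add, add_mul, mul_assoc, X0, Xj, Xk, Z0j, Zj0, Z0k, Zk0, Zjk, Zkj, hJK1, hJK2, hKJ1, hKJ2, h0, hj, hk, h0j, hj0, h0k, hk0, hjk, hkj, mul_zero, zero_mul, add_zero, zero_add]
          rw [key]; exact add_mem (mDT _ _) (mBT _)
      · constructor
        · have key : f₀ * r * fj * (fj + fk) * y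
              = f₀ * r * fj * y * f₀ + f₀ * (r * fj * y) * fj := by
            conv_lhs => rw [← hy']
            simp only [hsum, mul_add, add_mul, mul_assoc, X0, Xj, Xk, Z0j, Zj0, Z0k, Zk0, Zjk, Zkj, hJK1, hJK2, hKJ1, hKJ2, h0, hj, hk, h0j, hj0, h0k, hk0, hjk, hkj, mul_zero, zero_mul, add_zero, zero_add]
          rw [key]; exact add_mem (mDT _ _) (mCT _)
        · have key : y * (fj + fk) * (f₀ * r * fj) = 0 := by
            simp only [hsum, mul_add, add_mul, mul_assoc, X0, Xj, Xk, Z0j, Zj0, Z0k, Zk0, Zjk, Zkj, hJK1, hJK2, hKJ1, hKJ2, h0, hj, hk, h0j, hj0, h0k, hk0, hjk, hkj, mul_zero, zero_mul, add_zero, zero_add]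
          rw [key]; exact zero_mem T
      · constructor
        · have key : f₀ * r * fj * s * f₀ * (fj + fk) * y = 0 := by
            simp only [hsum, mul_add, add_mul, mul_assoc, X0, Xj, Xk, Z0j, Zj0, Z0k, Zk0, Zjk, Zkj, hJK1, hJK2, hKJ1, hKJ2, h0, hj, hk, h0j, hj0, h0k, hk0, hjk, hkj, mul_zero, zero_mul, add_zero, zero_add]
          rw [key]; exact zero_mem T
        · have key : y * (fj + fk) * (f₀ * r * fj * s * f₀) = 0 := by
            simp only [hsum, mul_add, add_mul, mul_assoc, X0, Xj, Xk, Z0j, Zj0, Z0k, Zk0, Zjk, Zkj, hJK1, hJK2, hKJ1, hKJ2, h0, hj, hk, h0j, hj0, h0k, hk0, hjk, hkj, mul_zero, zero_mul, add_zero, zero_add]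
          rw [key]; exact zero_mem T
    | zero =>
      intro y hy
      constructor
      · rw [zero_mul, zero_mul]; exact zero_mem T
      · rw [mul_zero]; exact zero_mem T
    | add x z hxc hzc ihx ihz =>
      intro y hy
      obtain ⟨a1, a2⟩ := ihx y hy
      obtain ⟨b1, b2⟩ := ihz y hy
      constructor
      · rw [add_mul, add_mul]; exact add_mem a1 b1
      · rw [mul_add]; exact add_mem a2 b2
    | neg x hxc ihx =>
      intro y hy
      obtain ⟨a1, a2⟩ := ihx y hy
      constructor
      · rw [neg_mul, neg_mul]; exact neg_mem a1
      · rw [mul_neg]; exact neg_mem a2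
  have hIdealT : IsIdealIn (fj + fk) Sset (T : Set R) :=
    ⟨hTS, zero_mem T, fun x hx y hy => add_mem hx hy, fun x hx => neg_mem hx, hTmul⟩
  -- the generated ideal equals T
  have hIjT : genIdealIn (fj + fk) Sset fj = (T : Set R) := by
    apply Set.Subset.antisymm
    · exact Set.sInter_subset_of_mem ⟨hIdealT, hfjT⟩
    · intro w hw
      rw [genIdealIn]
      rw [Set.mem_sInter]
      rintro I ⟨⟨hIS, hI0, hIadd, hIneg, hImul⟩, hfjI⟩
      rw [hT] at hw
      induction hw using AddSubgroup.closure_induction with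
      | mem w hw =>
        have memC : ∀ r : R, f₀ * r * fj ∈ I := by
          intro r
          have t := (hImul fj hfjI (e * (f₀ * r) * e) (hS (f₀ * r))).2
          have key : e * (f₀ * r) * e * (fj + fk) * fj = f₀ * r * fj := by
            simp only [hsum, mul_add, add_mul, mul_assoc, X0, Xj, Xk, Z0j, Zj0, Z0k, Zk0, Zjk, Zkj, hJK1, hJK2, hKJ1, hKJ2, h0, hj, hk, h0j, hj0, h0k, hk0, hjk, hkj, mul_zero, zero_mul, add_zero, zero_add]
          rwa [key] at t
        obtain ((⟨r, rfl⟩ | ⟨r, rfl⟩) | ⟨r, rfl⟩) | ⟨r, s, rfl⟩ := hw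
        · have t1 := (hImul fj hfjI (e * r * e) (hS r)).1
          have t2 := (hImul _ t1 fj hfjS).1
          have key : fj * (fj + fk) * (e * r * e) * (fj + fk) * fj = fj * r * fj := by
            simp only [hsum, mul_add, add_mul, mul_assoc, X0, Xj, Xk, Z0j, Zj0, Z0k, Zk0, Zjk, Zkj, hJK1, hJK2, hKJ1, hKJ2, h0, hj, hk, h0j, hj0, h0k, hk0, hjk, hkj, mul_zero, zero_mul, add_zero, zero_add]
          rwa [key] at t2
        · have t := (hImul fj hfjI (e * (r * f₀) * e) (hS (r * f₀))).1
          have key : fj * (fj + fk) * (e * (r * f₀) * e) = fj * r * f₀ := by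
            simp only [hsum, mul_add, add_mul, mul_assoc, X0, Xj, Xk, Z0j, Zj0, Z0k, Zk0, Zjk, Zkj, hJK1, hJK2, hKJ1, hKJ2, h0, hj, hk, h0j, hj0, h0k, hk0, hjk, hkj, mul_zero, zero_mul, add_zero, zero_add]
          rwa [key] at t
        · exact memC r
        · have t := (hImul _ (memC r) (e * (s * f₀) * e) (hS (s * f₀))).1
          have key : f₀ * r * fj * (fj + fk) * (e * (s * f₀) * e)
              = f₀ * r * fj * s * f₀ := by
            simp only [hsum, mul_add, add_mul, mul_assoc, X0, Xj, Xk, Z0j, Zj0, Z0k, Zk0, Zjk, Zkj, hJK1, hJK2, hKJ1, hKJ2, h0, hj, hk, h0j, hj0, h0k, hk0, hjk, hkj, mul_zero, zero_mul, add_zero, zero_add]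
          rwa [key] at t
      | zero => exact hI0
      | add a b hac hbc iha ihb => exact hIadd a iha b ihb
      | neg a hac iha => exact hIneg a iha
  -- products T * N and N * T
  have hXY : ∀ x ∈ (T : Set R), ∀ y ∈ (N : Set R),
      x * (fj + fk) * y ∈ (N : Set R) := by
    intro x hx
    rw [hT] at hx
    induction hx using AddSubgroup.closure_induction with
    | mem x hx =>
      intro y hy
      rw [hN] at hy
      induction hy using AddSubgroup.closure_induction with
      | mem y hy =>
        obtain ((⟨r, rfl⟩ | ⟨r, rfl⟩) | ⟨r, rfl⟩) | ⟨r, s, rfl⟩ := hx <;>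
          obtain (⟨s', rfl⟩ | ⟨s', rfl⟩) | ⟨s', t', rfl⟩ := hy
        · have key : fj * r * fj * (fj + fk) * (fj * s' * f₀)
              = fj * (r * fj * s') * f₀ := by simp only [hsum, mul_add, add_mul, mul_assoc, X0, Xj, Xk, Z0j, Zj0, Z0k, Zk0, Zjk, Zkj, hJK1, hJK2, hKJ1, hKJ2, h0, hj, hk, h0j, hj0, h0k, hk0, hjk, hkj, mul_zero, zero_mul, add_zero, zero_add]
          rw [key]; exact mBN _
        · have key : fj * r * fj * (fj + fk) * (f₀ * s' * fj) = 0 := by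
            simp only [hsum, mul_add, add_mul, mul_assoc, X0, Xj, Xk, Z0j, Zj0, Z0k, Zk0, Zjk, Zkj, hJK1, hJK2, hKJ1, hKJ2, h0, hj, hk, h0j, hj0, h0k, hk0, hjk, hkj, mul_zero, zero_mul, add_zero, zero_add]
          rw [key]; exact zero_mem N
        · have key : fj * r * fj * (fj + fk) * (f₀ * s' * fj * t' * f₀) = 0 := by
            simp only [hsum, mul_add, add_mul, mul_assoc, X0, Xj, Xk, Z0j, Zj0, Z0k, Zk0, Zjk, Zkj, hJK1, hJK2, hKJ1, hKJ2, h0, hj, hk, h0j, hj0, h0k, hk0, hjk, hkj, mul_zero, zero_mul, add_zero, zero_add]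
          rw [key]; exact zero_mem N
        · have key : fj * r * f₀ * (fj + fk) * (fj * s' * f₀) = 0 := by
            simp only [hsum, mul_add, add_mul, mul_assoc, X0, Xj, Xk, Z0j, Zj0, Z0k, Zk0, Zjk, Zkj, hJK1, hJK2, hKJ1, hKJ2, h0, hj, hk, h0j, hj0, h0k, hk0, hjk, hkj, mul_zero, zero_mul, add_zero, zero_add]
          rw [key]; exact zero_mem N
        · have key : fj * r * f₀ * (fj + fk) * (f₀ * s' * fj) = 0 := by
            simp only [hsum, mul_add, add_mul, mul_assoc, X0, Xj, Xk, Z0j, Zj0, Z0k, Zk0, Zjk, Zkj, hJK1, hJK2, hKJ1, hKJ2, h0, hj, hk, h0j, hj0, h0k, hk0, hjk, hkj, mul_zero, zero_mul, add_zero, zero_add]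
          rw [key]; exact zero_mem N
        · have key : fj * r * f₀ * (fj + fk) * (f₀ * s' * fj * t' * f₀) = 0 := by
            simp only [hsum, mul_add, add_mul, mul_assoc, X0, Xj, Xk, Z0j, Zj0, Z0k, Zk0, Zjk, Zkj, hJK1, hJK2, hKJ1, hKJ2, h0, hj, hk, h0j, hj0, h0k, hk0, hjk, hkj, mul_zero, zero_mul, add_zero, zero_add]
          rw [key]; exact zero_mem N
        · have key : f₀ * r * fj * (fj + fk) * (fj * s' * f₀)
              = f₀ * r * fj * s' * f₀ := by simp only [hsum, mul_add, add_mul, mul_assoc, X0, Xj, Xk, Z0j, Zj0, Z0k, Zk0, Zjk, Zkj, hJK1, hJK2, hKJ1, hKJ2, h0, hj, hk, h0j, hj0, h0k, hk0, hjk, hkj, mul_zero, zero_mul, add_zero, zero_add]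
          rw [key]; exact mDN _ _
        · have key : f₀ * r * fj * (fj + fk) * (f₀ * s' * fj) = 0 := by
            simp only [hsum, mul_add, add_mul, mul_assoc, X0, Xj, Xk, Z0j, Zj0, Z0k, Zk0, Zjk, Zkj, hJK1, hJK2, hKJ1, hKJ2, h0, hj, hk, h0j, hj0, h0k, hk0, hjk, hkj, mul_zero, zero_mul, add_zero, zero_add]
          rw [key]; exact zero_mem N
        · have key : f₀ * r * fj * (fj + fk) * (f₀ * s' * fj * t' * f₀) = 0 := by
            simp only [hsum, mul_add, add_mul, mul_assoc, X0, Xj, Xk, Z0j, Zj0, Z0k, Zk0, Zjk, Zkj, hJK1, hJK2, hKJ1, hKJ2, h0, hj, hk, h0j, hj0, h0k, hk0, hjk, hkj, mul_zero, zero_mul, add_zero, zero_add]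
          rw [key]; exact zero_mem N
        · have key : f₀ * r * fj * s * f₀ * (fj + fk) * (fj * s' * f₀) = 0 := by
            simp only [hsum, mul_add, add_mul, mul_assoc, X0, Xj, Xk, Z0j, Zj0, Z0k, Zk0, Zjk, Zkj, hJK1, hJK2, hKJ1, hKJ2, h0, hj, hk, h0j, hj0, h0k, hk0, hjk, hkj, mul_zero, zero_mul, add_zero, zero_add]
          rw [key]; exact zero_mem N
        · have key : f₀ * r * fj * s * f₀ * (fj + fk) * (f₀ * s' * fj) = 0 := by
            simp only [hsum, mul_add, add_mul, mul_assoc, X0, Xj, Xk, Z0j, Zj0, Z0k, Zk0, Zjk, Zkj, hJK1, hJK2, hKJ1, hKJ2, h0, hj, hk, h0j, hj0, h0k, hk0, hjk, hkj, mul_zero, zero_mul, add_zero, zero_add]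
          rw [key]; exact zero_mem N
        · have key : f₀ * r * fj * s * f₀ * (fj + fk) * (f₀ * s' * fj * t' * f₀) = 0 := by
            simp only [hsum, mul_add, add_mul, mul_assoc, X0, Xj, Xk, Z0j, Zj0, Z0k, Zk0, Zjk, Zkj, hJK1, hJK2, hKJ1, hKJ2, h0, hj, hk, h0j, hj0, h0k, hk0, hjk, hkj, mul_zero, zero_mul, add_zero, zero_add]
          rw [key]; exact zero_mem N
      | zero => rw [mul_zero]; exact zero_mem N
      | add a b hac hbc iha ihb => rw [mul_add]; exact add_mem iha ihb
      | neg a hac iha => rw [mul_neg]; exact neg_mem iha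
    | zero =>
      intro y hy
      rw [zero_mul, zero_mul]; exact zero_mem N
    | add a b hac hbc iha ihb =>
      intro y hy
      rw [add_mul, add_mul]; exact add_mem (iha y hy) (ihb y hy)
    | neg a hac iha =>
      intro y hy
      rw [neg_mul, neg_mul]; exact neg_mem (iha y hy)
  have hYX : ∀ x ∈ (T : Set R), ∀ y ∈ (N : Set R),
      y * (fj + fk) * x ∈ (N : Set R) := by
    intro x hx
    rw [hT] at hx
    induction hx using AddSubgroup.closure_induction with
    | mem x hx =>
      intro y hy
      rw [hN] at hy
      induction hy using AddSubgroup.closure_induction with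
      | mem y hy =>
        obtain ((⟨r, rfl⟩ | ⟨r, rfl⟩) | ⟨r, rfl⟩) | ⟨r, s, rfl⟩ := hx <;>
          obtain (⟨s', rfl⟩ | ⟨s', rfl⟩) | ⟨s', t', rfl⟩ := hy
        · have key : fj * s' * f₀ * (fj + fk) * (fj * r * fj) = 0 := by
            simp only [hsum, mul_add, add_mul, mul_assoc, X0, Xj, Xk, Z0j, Zj0, Z0k, Zk0, Zjk, Zkj, hJK1, hJK2, hKJ1, hKJ2, h0, hj, hk, h0j, hj0, h0k, hk0, hjk, hkj, mul_zero, zero_mul, add_zero, zero_add]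
          rw [key]; exact zero_mem N
        · have key : f₀ * s' * fj * (fj + fk) * (fj * r * fj)
              = f₀ * (s' * fj * r) * fj := by simp only [hsum, mul_add, add_mul, mul_assoc, X0, Xj, Xk, Z0j, Zj0, Z0k, Zk0, Zjk, Zkj, hJK1, hJK2, hKJ1, hKJ2, h0, hj, hk, h0j, hj0, h0k, hk0, hjk, hkj, mul_zero, zero_mul, add_zero, zero_add]
          rw [key]; exact mCN _
        · have key : f₀ * s' * fj * t' * f₀ * (fj + fk) * (fj * r * fj) = 0 := by
            simp only [hsum, mul_add, add_mul, mul_assoc, X0, Xj, Xk, Z0j, Zj0, Z0k, Zk0, Zjk, Zkj, hJK1, hJK2, hKJ1, hKJ2, h0, hj, hk, h0j, hj0, h0k, hk0, hjk, hkj, mul_zero, zero_mul, add_zero, zero_add]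
          rw [key]; exact zero_mem N
        · have key : fj * s' * f₀ * (fj + fk) * (fj * r * f₀) = 0 := by
            simp only [hsum, mul_add, add_mul, mul_assoc, X0, Xj, Xk, Z0j, Zj0, Z0k, Zk0, Zjk, Zkj, hJK1, hJK2, hKJ1, hKJ2, h0, hj, hk, h0j, hj0, h0k, hk0, hjk, hkj, mul_zero, zero_mul, add_zero, zero_add]
          rw [key]; exact zero_mem N
        · have key : f₀ * s' * fj * (fj + fk) * (fj * r * f₀)
              = f₀ * s' * fj * r * f₀ := by simp only [hsum, mul_add, add_mul, mul_assoc, X0, Xj, Xk, Z0j, Zj0, Z0k, Zk0, Zjk, Zkj, hJK1, hJK2, hKJ1, hKJ2, h0, hj, hk, h0j, hj0, h0k, hk0, hjk, hkj, mul_zero, zero_mul, add_zero, zero_add]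
          rw [key]; exact mDN _ _
        · have key : f₀ * s' * fj * t' * f₀ * (fj + fk) * (fj * r * f₀) = 0 := by
            simp only [hsum, mul_add, add_mul, mul_assoc, X0, Xj, Xk, Z0j, Zj0, Z0k, Zk0, Zjk, Zkj, hJK1, hJK2, hKJ1, hKJ2, h0, hj, hk, h0j, hj0, h0k, hk0, hjk, hkj, mul_zero, zero_mul, add_zero, zero_add]
          rw [key]; exact zero_mem N
        · have key : fj * s' * f₀ * (fj + fk) * (f₀ * r * fj) = 0 := by
            simp only [hsum, mul_add, add_mul, mul_assoc, X0, Xj, Xk, Z0j, Zj0, Z0k, Zk0, Zjk, Zkj, hJK1, hJK2, hKJ1, hKJ2, h0, hj, hk, h0j, hj0, h0k, hk0, hjk, hkj, mul_zero, zero_mul, add_zero, zero_add]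
          rw [key]; exact zero_mem N
        · have key : f₀ * s' * fj * (fj + fk) * (f₀ * r * fj) = 0 := by
            simp only [hsum, mul_add, add_mul, mul_assoc, X0, Xj, Xk, Z0j, Zj0, Z0k, Zk0, Zjk, Zkj, hJK1, hJK2, hKJ1, hKJ2, h0, hj, hk, h0j, hj0, h0k, hk0, hjk, hkj, mul_zero, zero_mul, add_zero, zero_add]
          rw [key]; exact zero_mem N
        · have key : f₀ * s' * fj * t' * f₀ * (fj + fk) * (f₀ * r * fj) = 0 := by
            simp only [hsum, mul_add, add_mul, mul_assoc, X0, Xj, Xk, Z0j, Zj0, Z0k, Zk0, Zjk, Zkj, hJK1, hJK2, hKJ1, hKJ2, h0, hj, hk, h0j, hj0, h0k, hk0, hjk, hkj, mul_zero, zero_mul, add_zero, zero_add]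
          rw [key]; exact zero_mem N
        · have key : fj * s' * f₀ * (fj + fk) * (f₀ * r * fj * s * f₀) = 0 := by
            simp only [hsum, mul_add, add_mul, mul_assoc, X0, Xj, Xk, Z0j, Zj0, Z0k, Zk0, Zjk, Zkj, hJK1, hJK2, hKJ1, hKJ2, h0, hj, hk, h0j, hj0, h0k, hk0, hjk, hkj, mul_zero, zero_mul, add_zero, zero_add]
          rw [key]; exact zero_mem N
        · have key : f₀ * s' * fj * (fj + fk) * (f₀ * r * fj * s * f₀) = 0 := by
            simp only [hsum, mul_add, add_mul, mul_assoc, X0, Xj, Xk, Z0j, Zj0, Z0k, Zk0, Zjk, Zkj, hJK1, hJK2, hKJ1, hKJ2, h0, hj, hk, h0j, hj0, h0k, hk0, hjk, hkj, mul_zero, zero_mul, add_zero, zero_add]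
          rw [key]; exact zero_mem N
        · have key : f₀ * s' * fj * t' * f₀ * (fj + fk) * (f₀ * r * fj * s * f₀) = 0 := by
            simp only [hsum, mul_add, add_mul, mul_assoc, X0, Xj, Xk, Z0j, Zj0, Z0k, Zk0, Zjk, Zkj, hJK1, hJK2, hKJ1, hKJ2, h0, hj, hk, h0j, hj0, h0k, hk0, hjk, hkj, mul_zero, zero_mul, add_zero, zero_add]
          rw [key]; exact zero_mem N
      | zero => rw [zero_mul, zero_mul]; exact zero_mem N
      | add a b hac hbc iha ihb => rw [add_mul, add_mul]; exact add_mem iha ihb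
      | neg a hac iha => rw [neg_mul, neg_mul]; exact neg_mem iha
    | zero =>
      intro y hy
      rw [mul_zero]; exact zero_mem N
    | add a b hac hbc iha ihb =>
      intro y hy
      rw [mul_add]; exact add_mem (iha y hy) (ihb y hy)
    | neg a hac iha =>
      intro y hy
      rw [mul_neg]; exact neg_mem (iha y hy)
  -- annihilation
  have hZ : ∀ x ∈ (T : Set R), ∀ y ∈ (N : Set R),
      x * (fj + fk) * y * (fj + fk) = 0 := by
    intro x hx
    rw [hT] at hx
    induction hx using AddSubgroup.closure_induction with
    | mem x hx =>
      intro y hy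
      rw [hN] at hy
      induction hy using AddSubgroup.closure_induction with
      | mem y hy =>
        obtain ((⟨r, rfl⟩ | ⟨r, rfl⟩) | ⟨r, rfl⟩) | ⟨r, s, rfl⟩ := hx <;>
          obtain (⟨s', rfl⟩ | ⟨s', rfl⟩) | ⟨s', t', rfl⟩ := hy <;>
          simp only [hsum, mul_add, add_mul, mul_assoc, X0, Xj, Xk, Z0j, Zj0, Z0k, Zk0, Zjk, Zkj, hJK1, hJK2, hKJ1, hKJ2, h0, hj, hk, h0j, hj0, h0k, hk0, hjk, hkj, mul_zero, zero_mul, add_zero, zero_add]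
      | zero => rw [mul_zero, zero_mul]
      | add a b hac hbc iha ihb => rw [mul_add (x * (fj + fk)) a b, add_mul, iha, ihb, add_zero]
      | neg a hac iha => rw [mul_neg, neg_mul, iha, neg_zero]
    | zero =>
      intro y hy
      rw [zero_mul, zero_mul, zero_mul]
    | add a b hac hbc iha ihb =>
      intro y hy
      rw [add_mul, add_mul, add_mul, iha y hy, ihb y hy, add_zero]
    | neg a hac iha =>
      intro y hy
      rw [neg_mul, neg_mul, neg_mul, iha y hy, neg_zero]
  -- final assembly
  unfold CornerIdealConcl
  refine ⟨hIjT, ?_, ?_, ?_, ?_⟩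
  · rw [hIjT]; exact hNT
  · intro x hx y hy
    rw [hIjT] at hx
    exact ⟨hXY x hx y hy, hYX x hx y hy⟩
  · intro x hx y hy z hz
    rw [hIjT] at hx
    rw [hZ x hx y hy, zero_mul]
  · intro x hx y hy z hz
    rw [hZ x (hNT hx) y hy, zero_mul]

/-- Let `e = f₀ + f₁ + f₂` with `f₀, f₁, f₂` pairwise orthogonal idempotents satisfying
`f₁Rf₂ = f₂Rf₁ = 0`, and set `f = f₁ + f₂`. Then in the ring `S = (eRe, ∗)` with
`x ∗ y = x * f * y`, for `j ∈ {1, 2}` the ideal generated by `fⱼ` is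
`fⱼRfⱼ + fⱼRf₀ + f₀Rfⱼ + f₀RfⱼRf₀`, and `Nⱼ = fⱼRf₀ + f₀Rfⱼ + f₀RfⱼRf₀` is an ideal of it
that is annihilated as stated (nilpotent of index at most `3`). -/
theorem corner_ideal_structure {R : Type*} [Ring R] (e f₀ f₁ f₂ : R)
    (he : e * e = e) (h0 : f₀ * f₀ = f₀) (h1 : f₁ * f₁ = f₁) (h2 : f₂ * f₂ = f₂)
    (hsum : e = f₀ + f₁ + f₂)
    (h01 : f₀ * f₁ = 0) (h10 : f₁ * f₀ = 0) (h02 : f₀ * f₂ = 0) (h20 : f₂ * f₀ = 0)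
    (h12 : f₁ * f₂ = 0) (h21 : f₂ * f₁ = 0)
    (h1R2 : ∀ r : R, f₁ * r * f₂ = 0) (h2R1 : ∀ r : R, f₂ * r * f₁ = 0) :
    CornerIdealConcl e f₀ f₁ (f₁ + f₂) ∧ CornerIdealConcl e f₀ f₂ (f₁ + f₂) := by
  constructor
  · exact corner_key e f₀ f₁ f₂ he h0 h1 h2 hsum h01 h10 h02 h20 h12 h21 h1R2 h2R1
  · have h := corner_key e f₀ f₂ f₁ he h0 h2 h1 (by rw [hsum, add_right_comm])
      h02 h20 h01 h10 h21 h12 h2R1 h1R2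
    rwa [add_comm f₂ f₁] at h
end

section
/- Let R be a unital ring and a ∈ R such that a and a² are both regular, with a = aba and a²ca² = a². Set e = ab. Then eae = a²b is a regular element of the corner ring eRe, with inner inverse eace ∈ eRe (i.e., (a²b)(eace)(a²b) = a²b). -/
/-- If `a = a*b*a` and `a² = a²*c*a²`, and `e = a*b`, then `e*a*e = a²*b` is a regular
element of the corner ring `eRe`, with inner inverse `e*a*c*e ∈ eRe`. -/
theorem corner_elt_regular {R : Type*} [Ring R] (a b c : R)
    (hb : a * b * a = a) (hc : a * a * c * (a * a) = a * a) :
    (a * b) * a * (a * b) = a * a * b ∧  -- eae = a²b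
    (a * b) * ((a * b) * (a * c) * (a * b)) * (a * b) =
      (a * b) * (a * c) * (a * b) ∧  -- eace ∈ eRe
    (a * a * b) * ((a * b) * (a * c) * (a * b)) * (a * a * b) = a * a * b := by
  have he : (a * b) * (a * b) = a * b := by
    rw [← mul_assoc, hb]
  refine ⟨by rw [hb, ← mul_assoc], ?_, ?_⟩
  · calc (a * b) * ((a * b) * (a * c) * (a * b)) * (a * b)
        = ((a * b) * (a * b)) * (a * c) * ((a * b) * (a * b)) := by
          noncomm_ring
      _ = (a * b) * (a * c) * (a * b) := by rw [he]
  · have h1 : a * a * b * (a * b) = a * a * b := by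
      calc a * a * b * (a * b) = a * ((a * b) * (a * b)) := by noncomm_ring
        _ = a * (a * b) := by rw [he]
        _ = a * a * b := by rw [← mul_assoc]
    have h2 : a * a * b * a = a * a := by
      rw [mul_assoc a a b, mul_assoc a, hb]
    calc (a * a * b) * ((a * b) * (a * c) * (a * b)) * (a * a * b)
        = (a * a * b * (a * b)) * (a * c) * ((a * b) * a * (a * b)) := by
          noncomm_ring
      _ = (a * a * b) * (a * c) * (a * (a * b)) := by rw [h1, hb]
      _ = (a * a * b * a) * c * (a * a) * b := by noncomm_ring
      _ = a * a * c * (a * a) * b := by rw [h2]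
      _ = a * a * b := by rw [hc]
end

section
/- Let R be a unital ring, I a (non-unital) ring that decomposes as a direct sum of ideals I = K ⊕ L, and suppose I/J(I) is a simple ring. Then K ⊆ J(I) or L ⊆ J(I); in particular if I contains an idempotent f with I generated by f as an ideal of itself and J(I)³ = 0, then I is directly irreducible (one of K, L is zero). -/
/-- The Jacobson radical of a (possibly non-unital) ring `I`: the set of `x` such that
`x*r` is right quasi-regular for every `r`. -/
def jacobsonNU (I : Type*) [NonUnitalRing I] : Set I :=
  {x : I | ∀ r : I, ∃ b : I, x * r + b - x * r * b = 0}

section aux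
variable {I : Type*} [NonUnitalRing I]

/-- if `a*b` is right quasi-regular, then so is `b*a`. -/
lemma rqr_swap {a b : I} (h : ∃ c : I, a * b + c - a * b * c = 0) :
    ∃ d : I, b * a + d - b * a * d = 0 := by
  obtain ⟨c, hc⟩ := h
  refine ⟨b * c * a - b * a, ?_⟩
  have key : b * a + (b * c * a - b * a) - b * a * (b * c * a - b * a)
      = b * (a * b + c - a * b * c) * a := by noncomm_ring
  rw [key, hc, mul_zero, zero_mul]

lemma jac_zero : (0 : I) ∈ jacobsonNU I := fun r => ⟨0, by simp⟩

lemma jac_add {x y : I} (hx : x ∈ jacobsonNU I) (hy : y ∈ jacobsonNU I) :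
    x + y ∈ jacobsonNU I := by
  intro r
  obtain ⟨b, hb⟩ := hx r
  obtain ⟨c, hc⟩ := hy (r - r * b)
  refine ⟨b + c - b * c, ?_⟩
  have key : (x + y) * r + (b + c - b * c) - (x + y) * r * (b + c - b * c)
      = (x * r + b - x * r * b) + (y * (r - r * b) + c - y * (r - r * b) * c)
        - (x * r + b - x * r * b) * c := by noncomm_ring
  rw [key, hb, hc, zero_mul]; simp

lemma jac_neg {x : I} (hx : x ∈ jacobsonNU I) : -x ∈ jacobsonNU I := by
  intro r
  obtain ⟨b, hb⟩ := hx (-r)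
  exact ⟨b, by rw [neg_mul, ← mul_neg]; exact hb⟩

lemma jac_mul_right {x : I} (s : I) (hx : x ∈ jacobsonNU I) : x * s ∈ jacobsonNU I := by
  intro r
  obtain ⟨b, hb⟩ := hx (s * r)
  exact ⟨b, by rw [mul_assoc]; exact hb⟩

lemma jac_mul_left {x : I} (s : I) (hx : x ∈ jacobsonNU I) : s * x ∈ jacobsonNU I := by
  intro r
  have h1 : ∃ c : I, (x * r) * s + c - (x * r) * s * c = 0 := by
    obtain ⟨c, hc⟩ := hx (r * s)
    exact ⟨c, by rw [mul_assoc]; exact hc⟩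
  obtain ⟨d, hd⟩ := rqr_swap h1
  exact ⟨d, by simpa only [mul_assoc] using hd⟩

/-- `jacobsonNU I` as a two-sided ideal. -/
def jacIdeal (I : Type*) [NonUnitalRing I] : TwoSidedIdeal I :=
  .mk' (jacobsonNU I) jac_zero jac_add jac_neg (fun h => jac_mul_left _ h)
    (fun h => jac_mul_right _ h)

lemma mem_jacIdeal {x : I} : x ∈ jacIdeal I ↔ x ∈ jacobsonNU I :=
  TwoSidedIdeal.mem_mk' _ _ _ _ _ _ x

lemma coe_jacIdeal : (jacIdeal I : Set I) = jacobsonNU I :=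
  TwoSidedIdeal.coe_mk' _ _ _ _ _ _

end aux

/-- Let `I` be a (possibly non-unital) ring which is a direct sum of two-sided ideals
`I = K ⊕ L`, and suppose `I/J(I)` is a simple ring (its multiplication is nonzero modulo
`J(I)` and every two-sided ideal containing `J(I)` is `J(I)` or all of `I`). Then
`K ⊆ J(I)` or `L ⊆ J(I)`; in particular, if `I` contains an idempotent `f` generating `I`
as an ideal of itself and `J(I)³ = 0`, then `I` is directly irreducible: `K = ⊥` or `L = ⊥`. -/
theorem direct_summand_in_radical {I : Type*} [NonUnitalRing I]
    (K L : TwoSidedIdeal I) (hKL : K ⊓ L = ⊥) (hKL' : K ⊔ L = ⊤)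
    (hmulJ : ∃ x y : I, x * y ∉ jacobsonNU I)
    (hsimple : ∀ T : TwoSidedIdeal I, jacobsonNU I ⊆ (T : Set I) →
      (T : Set I) = jacobsonNU I ∨ (T : Set I) = Set.univ) :
    ((K : Set I) ⊆ jacobsonNU I ∨ (L : Set I) ⊆ jacobsonNU I) ∧
    ((∃ f : I, f * f = f ∧ ∀ T : TwoSidedIdeal I, f ∈ T → T = ⊤) →
      (∀ x ∈ jacobsonNU I, ∀ y ∈ jacobsonNU I, ∀ z ∈ jacobsonNU I, x * y * z = 0) →
      K = ⊥ ∨ L = ⊥) := by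
  have hcross : ∀ k ∈ K, ∀ l ∈ L, k * l = 0 ∧ l * k = 0 := by
    intro k hk l hl
    constructor
    · have : k * l ∈ K ⊓ L :=
        ⟨K.mul_mem_right _ _ hk, L.mul_mem_left _ _ hl⟩
      rw [hKL] at this; exact this
    · have : l * k ∈ K ⊓ L :=
        ⟨K.mul_mem_left _ _ hk, L.mul_mem_right _ _ hl⟩
      rw [hKL] at this; exact this
  have h1 : (K : Set I) ⊆ jacobsonNU I ∨ (L : Set I) ⊆ jacobsonNU I := by
    have hJK : jacobsonNU I ⊆ ((jacIdeal I ⊔ K : TwoSidedIdeal I) : Set I) := by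
      intro x hx; exact TwoSidedIdeal.mem_sup_left (mem_jacIdeal.mpr hx)
    have hJL : jacobsonNU I ⊆ ((jacIdeal I ⊔ L : TwoSidedIdeal I) : Set I) := by
      intro x hx; exact TwoSidedIdeal.mem_sup_left (mem_jacIdeal.mpr hx)
    rcases hsimple _ hJK with hK | hK
    · left
      intro x hx
      rw [← hK]
      exact TwoSidedIdeal.mem_sup_right hx
    · rcases hsimple _ hJL with hL | hL
      · right
        intro x hx
        rw [← hL]
        exact TwoSidedIdeal.mem_sup_right hx
      · exfalso
        obtain ⟨x, y, hxy⟩ := hmulJ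
        apply hxy
        have hx : x ∈ jacIdeal I ⊔ K := by
          have : x ∈ ((jacIdeal I ⊔ K : TwoSidedIdeal I) : Set I) := by
            rw [hK]; trivial
          exact this
        have hy : y ∈ jacIdeal I ⊔ L := by
          have : y ∈ ((jacIdeal I ⊔ L : TwoSidedIdeal I) : Set I) := by
            rw [hL]; trivial
          exact this
        obtain ⟨j1, hj1, k, hk, hxe⟩ := TwoSidedIdeal.mem_sup.mp hx
        obtain ⟨j2, hj2, l, hl, hye⟩ := TwoSidedIdeal.mem_sup.mp hy
        rw [mem_jacIdeal] at hj1 hj2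
        have hkl : k * l = 0 := (hcross k hk l hl).1
        have : x * y = j1 * y + k * j2 + k * l := by
          rw [← hxe, ← hye]; noncomm_ring
        rw [this, hkl, add_zero]
        exact jac_add (jac_mul_right _ hj1) (jac_mul_left _ hj2)
  refine ⟨h1, ?_⟩
  rintro ⟨f, hf, hgen⟩ hJ3
  have hftop : f ∈ K ⊔ L := by rw [hKL']; trivial
  obtain ⟨k, hk, l, hl, hfe⟩ := TwoSidedIdeal.mem_sup.mp hftop
  have hkl : k * l = 0 := (hcross k hk l hl).1
  have hlk : l * k = 0 := (hcross k hk l hl).2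
  have hsq : k * k - k = l - l * l := by
    have : (k + l) * (k + l) = k + l := by rw [hfe]; exact hf
    have h2 : k * k + l * l = k + l := by
      rw [← this]; rw [mul_add, add_mul, add_mul, hkl, hlk]; abel
    calc k * k - k = (k * k + l * l) - (k + l * l) := by abel
      _ = (k + l) - (k + l * l) := by rw [h2]
      _ = l - l * l := by abel
  have hmem : k * k - k ∈ K ⊓ L := by
    constructor
    · exact K.sub_mem (K.mul_mem_right _ _ hk) hk
    · rw [hsq]; exact L.sub_mem hl (L.mul_mem_right _ _ hl)
  rw [hKL] at hmem
  have hkk : k * k = k := sub_eq_zero.mp hmem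
  have hll : l * l = l := by
    have h0 : l - l * l = 0 := by rw [← hsq, hkk, sub_self]
    exact (sub_eq_zero.mp h0).symm
  rcases h1 with hKJ | hLJ
  · left
    have hkJ : k ∈ jacobsonNU I := hKJ hk
    have hk0 : k = 0 := by
      have := hJ3 k hkJ k hkJ k hkJ
      rw [hkk, hkk] at this; exact this
    have hfL : f ∈ L := by rw [← hfe, hk0, zero_add]; exact hl
    have hLtop : L = ⊤ := hgen L hfL
    rw [← hKL, hLtop, inf_top_eq]
  · right
    have hlJ : l ∈ jacobsonNU I := hLJ hl
    have hl0 : l = 0 := by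
      have := hJ3 l hlJ l hlJ l hlJ
      rw [hll, hll] at this; exact this
    have hfK : f ∈ K := by rw [← hfe, hl0, add_zero]; exact hk
    have hKtop : K = ⊤ := hgen K hfK
    rw [← hKL, hKtop, top_inf_eq]
end

section
/- Let R be a unital ring, a ∈ R regular with a = aba and a² = a²ca² regular, and suppose aRa = I₀ ⊕ I₁ ⊕ ⋯ ⊕ I_k is a direct sum of ideals with I₀² = 0. Then a² ∈ I₁ ⊕ ⋯ ⊕ I_k. -/
/-- `I` is a two-sided ideal of the (generally non-unital) ring given by the subset `A`
of `R` with the multiplication of `R`. -/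
def IsIdealOf {R : Type*} [Ring R] (A I : Set R) : Prop :=
  I ⊆ A ∧ (0 : R) ∈ I ∧ (∀ x ∈ I, ∀ y ∈ I, x + y ∈ I) ∧ (∀ x ∈ I, -x ∈ I) ∧
    ∀ x ∈ I, ∀ y ∈ A, x * y ∈ I ∧ y * x ∈ I

/-- The sum of a family of subsets of `R` (as additive subgroups). -/
def sumOfSets {R : Type*} [Ring R] {ι : Type*} (s : Set ι) (I : ι → Set R) : Set R :=
  (AddSubgroup.closure (⋃ i ∈ s, I i) : AddSubgroup R)

/-- Let `a` be regular (`a = a*b*a`) with `a²` regular (`a² = a²*c*a²`), and suppose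
`aRa = I₀ ⊕ I₁ ⊕ ⋯ ⊕ I_k` is a direct sum of ideals of `aRa` with `I₀² = 0`. Then
`a² ∈ I₁ ⊕ ⋯ ⊕ I_k`. -/
theorem sq_mem_sum_ideals {R : Type*} [Ring R] (a b c : R)
    (hb : a * b * a = a) (hc : a * a * c * (a * a) = a * a)
    (k : ℕ) (I : Fin (k + 1) → Set R)
    (hideal : ∀ i, IsIdealOf {x : R | ∃ r : R, x = a * r * a} (I i))
    (hsum : {x : R | ∃ r : R, x = a * r * a} = sumOfSets Set.univ I)
    (hdirect : ∀ i, I i ∩ sumOfSets {j | j ≠ i} I ⊆ {0})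
    (hI0 : ∀ x ∈ I 0, ∀ y ∈ I 0, x * y = 0) :
    a * a ∈ sumOfSets {j | j ≠ 0} I := by
  classical
  set A : Set R := {x : R | ∃ r : R, x = a * r * a} with hAdef
  -- A as an additive subgroup
  let A' : AddSubgroup R :=
    { carrier := A
      zero_mem' := ⟨0, by simp⟩
      add_mem' := by
        rintro x y ⟨r, rfl⟩ ⟨s, rfl⟩
        exact ⟨r + s, by noncomm_ring⟩
      neg_mem' := by
        rintro x ⟨r, rfl⟩
        exact ⟨-r, by noncomm_ring⟩ }
  let J : AddSubgroup R := AddSubgroup.closure (⋃ i ∈ {j : Fin (k+1) | j ≠ 0}, I i)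
  have hJ_eq : sumOfSets {j : Fin (k+1) | j ≠ 0} I = (J : Set R) := rfl
  -- each I i is a subset of A
  have hIA : ∀ i, I i ⊆ A := fun i => (hideal i).1
  -- J ⊆ A
  have hJA : (J : Set R) ⊆ A := by
    have : J ≤ A' := AddSubgroup.closure_le A' |>.mpr (by
      intro x hx
      simp only [Set.mem_iUnion] at hx
      obtain ⟨i, _, hxi⟩ := hx
      exact hIA i hxi)
    exact this
  -- J is closed under multiplication by elements of A on both sides
  have hJmul : ∀ x ∈ J, ∀ y ∈ A, x * y ∈ J ∧ y * x ∈ J := by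
    intro x hx
    refine AddSubgroup.closure_induction
      (p := fun x _ => ∀ y ∈ A, x * y ∈ J ∧ y * x ∈ J) ?_ ?_ ?_ ?_ hx
    · intro z hz y hy
      simp only [Set.mem_iUnion] at hz
      obtain ⟨i, hi, hzi⟩ := hz
      have h := (hideal i).2.2.2.2 z hzi y hy
      constructor <;> [exact AddSubgroup.subset_closure (Set.mem_biUnion hi h.1);
        exact AddSubgroup.subset_closure (Set.mem_biUnion hi h.2)]
    · intro y _
      exact ⟨by rw [zero_mul]; exact zero_mem J, by rw [mul_zero]; exact zero_mem J⟩
    · intro u v _ _ hu hv y hy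
      obtain ⟨h1, h2⟩ := hu y hy
      obtain ⟨h3, h4⟩ := hv y hy
      constructor
      · rw [add_mul]; exact add_mem h1 h3
      · rw [mul_add]; exact add_mem h2 h4
    · intro u _ hu y hy
      obtain ⟨h1, h2⟩ := hu y hy
      constructor
      · rw [neg_mul]; exact neg_mem h1
      · rw [mul_neg]; exact neg_mem h2
  -- every element of A decomposes as u + v with u ∈ I 0, v ∈ J
  have hdecomp : ∀ x ∈ A, ∃ u ∈ I 0, ∃ v ∈ J, x = u + v := by
    intro x hxA
    have hx : x ∈ AddSubgroup.closure (⋃ i ∈ (Set.univ : Set (Fin (k+1))), I i) := by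
      have : x ∈ sumOfSets (Set.univ : Set (Fin (k+1))) I := hsum ▸ hxA
      exact this
    refine AddSubgroup.closure_induction
      (p := fun x _ => ∃ u ∈ I 0, ∃ v ∈ J, x = u + v) ?_ ?_ ?_ ?_ hx
    · intro z hz
      simp only [Set.mem_iUnion] at hz
      obtain ⟨i, _, hzi⟩ := hz
      by_cases h0 : i = 0
      · exact ⟨z, h0 ▸ hzi, 0, zero_mem J, by simp⟩
      · refine ⟨0, (hideal 0).2.1, z, ?_, by simp⟩
        exact AddSubgroup.subset_closure (Set.mem_biUnion h0 hzi)
    · exact ⟨0, (hideal 0).2.1, 0, zero_mem J, by simp⟩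
    · rintro u v _ _ ⟨u1, hu1, u2, hu2, rfl⟩ ⟨v1, hv1, v2, hv2, rfl⟩
      exact ⟨u1 + v1, (hideal 0).2.2.1 u1 hu1 v1 hv1, u2 + v2, add_mem hu2 hv2, by abel⟩
    · rintro u _ ⟨u1, hu1, u2, hu2, rfl⟩
      exact ⟨-u1, (hideal 0).2.2.2.1 u1 hu1, -u2, neg_mem hu2, by abel⟩
  -- the three factors
  have hxA : a * (a * c) * a ∈ A := ⟨a * c, rfl⟩
  have hyA : a * c * a ∈ A := ⟨c, rfl⟩
  have hzA : a * (c * a) * a ∈ A := ⟨c * a, rfl⟩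
  have key : a * a = (a * (a * c) * a) * (a * c * a) * (a * (c * a) * a) := by
    have h3 : a * (a * c) * a * (a * c * a) * (a * (c * a) * a)
        = a * a * c * (a * a * c * (a * a * c * (a * a))) := by noncomm_ring
    rw [h3, hc, hc, hc]
  -- decompose the first two factors
  obtain ⟨x0, hx0, x1, hx1, hxeq⟩ := hdecomp _ hxA
  obtain ⟨y0, hy0, y1, hy1, hyeq⟩ := hdecomp _ hyA
  -- the product of the first two factors lies in J
  have hxy : (a * (a * c) * a) * (a * c * a) ∈ J := by
    rw [hxeq, hyeq]
    have e : (x0 + x1) * (y0 + y1) = x0 * y0 + (x0 * y1 + (x1 * y0 + x1 * y1)) := by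
      noncomm_ring
    rw [e, hI0 x0 hx0 y0 hy0, zero_add]
    exact add_mem (hJmul y1 hy1 x0 (hIA 0 hx0)).2
      (add_mem (hJmul x1 hx1 y0 (hIA 0 hy0)).1 (hJmul x1 hx1 y1 (hJA hy1)).1)
  -- conclude
  rw [hJ_eq]
  have : a * a ∈ J := by
    rw [key]
    exact (hJmul _ hxy _ hzA).1
  exact this
end
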